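/- arXiv:1210.2180 — 4 statements merged into one kernel-verified Lean document; each statement's English description precedes it below -/
import Mathlib

section
/- For fixed u > 0, the limit as n → ∞ (over natural numbers) of u·k_n'(u)/(n·k_n(u)) equals -1, where k_n is the modified spherical Hankel function and the derivative is with respect to u. -/
open Filter

open Finset

/-- The modified spherical Hankel function. -/
noncomputable def sphericalHankel (n : ℕ) (u : ℝ) : ℝ :=
  (Real.pi * Real.exp (-u) / (2 * u)) *
    ∑ l ∈ Finset.range (n + 1),
      ((Nat.factorial (n + l) : ℝ) / (Nat.factorial l * Nat.factorial (n - l))) *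
        (1 / (2 * u) ^ l)




namespace SHaux

lemma key_nat (n : ℕ) : ∀ j l, l + j = n →
    2 ^ j * n.factorial * (n + l).factorial ≤ (2 * n).factorial * l.factorial := by
  intro j
  induction j with
  | zero =>
    intro l hl
    simp only [Nat.add_zero] at hl
    subst hl
    rw [pow_zero, one_mul, two_mul, mul_comm]
  | succ j ih =>
    intro l hl
    have h := ih (l + 1) (by omega)
    have hln : l + 1 ≤ n := by omega
    have hpos : 0 < l + 1 := Nat.succ_pos l
    refine Nat.le_of_mul_le_mul_right ?_ hpos
    calc 2 ^ (j + 1) * n.factorial * (n + l).factorial * (l + 1)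
        = 2 ^ j * n.factorial * ((n + l).factorial * (2 * (l + 1))) := by ring
      _ ≤ 2 ^ j * n.factorial * ((n + l).factorial * (n + l + 1)) := by
          gcongr; omega
      _ = 2 ^ j * n.factorial * (n + (l + 1)).factorial := by
          rw [show n + (l+1) = (n+l) + 1 from rfl, Nat.factorial_succ]; ring
      _ ≤ (2 * n).factorial * (l + 1).factorial := h
      _ = (2 * n).factorial * l.factorial * (l + 1) := by
          rw [Nat.factorial_succ]; ring

noncomputable def a (n l : ℕ) : ℝ :=
  (Nat.factorial (n + l) : ℝ) / (Nat.factorial l * Nat.factorial (n - l))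

lemma a_pos (n l : ℕ) : 0 < a n l := by
  unfold a
  have h1 := Nat.factorial_pos (n + l)
  have h2 := Nat.factorial_pos l
  have h3 := Nat.factorial_pos (n - l)
  positivity

lemma a_key (n l : ℕ) (hl : l ≤ n) :
    a n l * 2 ^ (n - l) * (Nat.factorial (n - l) : ℝ) ≤ a n n := by
  unfold a
  have h2 : (0:ℝ) < (Nat.factorial l : ℝ) * Nat.factorial (n - l) := by
    have := Nat.factorial_pos l; have := Nat.factorial_pos (n - l); positivity
  have h3 : (0:ℝ) < (Nat.factorial n : ℝ) * Nat.factorial (n - n) := by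
    have := Nat.factorial_pos n; have := Nat.factorial_pos (n - n); positivity
  rw [div_mul_eq_mul_div, div_mul_eq_mul_div, div_le_div_iff₀ h2 h3]
  have hk := key_nat n (n - l) l (by omega)
  have hk' : 2 ^ (n - l) * n.factorial * (n + l).factorial * (n-l).factorial
      ≤ (2 * n).factorial * l.factorial * (n-l).factorial :=
    Nat.mul_le_mul_right _ hk
  have := (Nat.cast_le (α := ℝ)).mpr hk'
  rw [show n + n = 2 * n from (two_mul n).symm]
  push_cast at this ⊢
  simp only [Nat.sub_self, Nat.factorial_zero] at *
  ring_nf at this ⊢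
  linarith

end SHaux

namespace SHaux

open Finset

noncomputable def S (n : ℕ) (u : ℝ) : ℝ :=
  ∑ l ∈ range (n+1), a n l * (1 / (2*u) ^ l)

noncomputable def g (n : ℕ) (u : ℝ) : ℝ :=
  ∑ l ∈ range (n+1), a n l * (((l:ℝ) + 1 + u) * (1 / (2*u) ^ l))

lemma term_le (n l : ℕ) (hl : l ≤ n) (u : ℝ) (hu : 0 < u) :
    a n l * (1 / (2*u) ^ l) ≤
      (a n n * (1 / (2*u) ^ n)) * (u ^ (n-l) / (Nat.factorial (n-l))) := by
  have h2u : (0:ℝ) < 2*u := by linarith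
  have hsplit : (2*u)^n = (2*u)^l * (2*u)^(n-l) := by
    rw [← pow_add, Nat.add_sub_cancel' hl]
  have hx : (1 / (2*u)^l : ℝ) = (1 / (2*u)^n) * (2*u)^(n-l) := by
    rw [hsplit]
    field_simp
  rw [hx]
  have hfac : (0:ℝ) < (Nat.factorial (n-l) : ℝ) := by
    exact_mod_cast Nat.factorial_pos _
  have core : a n l * (2*u)^(n-l) ≤ a n n * (u^(n-l) / (Nat.factorial (n-l))) := by
    calc a n l * (2*u)^(n-l)
        = (a n l * 2^(n-l) * (Nat.factorial (n-l):ℝ)) * (u^(n-l) / (Nat.factorial (n-l))) := by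
          rw [mul_pow]; field_simp
      _ ≤ a n n * (u^(n-l) / (Nat.factorial (n-l))) := by
          apply mul_le_mul_of_nonneg_right (a_key n l hl) (by positivity)
  calc a n l * (1/(2*u)^n * (2*u)^(n-l))
      = (1/(2*u)^n) * (a n l * (2*u)^(n-l)) := by ring
    _ ≤ (1/(2*u)^n) * (a n n * (u^(n-l) / (Nat.factorial (n-l)))) :=
        mul_le_mul_of_nonneg_left core (by positivity)
    _ = a n n * (1/(2*u)^n) * (u^(n-l) / (Nat.factorial (n-l))) := by ring

lemma sum_tail_le (n : ℕ) (u : ℝ) (hu : 0 < u) :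
    ∑ l ∈ range (n+1), ((n:ℝ) - l) * (a n l * (1/(2*u)^l))
      ≤ (u * Real.exp u) * (a n n * (1/(2*u)^n)) := by
  have h2u : (0:ℝ) < 2*u := by linarith
  have step1 : ∑ l ∈ range (n+1), ((n:ℝ) - l) * (a n l * (1/(2*u)^l))
      ≤ ∑ l ∈ range (n+1),
          (((n - l : ℕ):ℝ) * (u^(n-l) / (Nat.factorial (n-l)))) * (a n n * (1/(2*u)^n)) := by
    apply Finset.sum_le_sum
    intro l hlmem
    have hln : l ≤ n := by
      have := Finset.mem_range.mp hlmem; omega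
    have hcast : ((n:ℝ) - l) = ((n - l : ℕ):ℝ) := by
      rw [Nat.cast_sub hln]
    rw [hcast]
    calc ((n - l : ℕ):ℝ) * (a n l * (1/(2*u)^l))
        ≤ ((n - l : ℕ):ℝ) * ((a n n * (1 / (2*u) ^ n)) * (u ^ (n-l) / (Nat.factorial (n-l)))) :=
          mul_le_mul_of_nonneg_left (term_le n l hln u hu) (Nat.cast_nonneg _)
      _ = (((n - l : ℕ):ℝ) * (u^(n-l) / (Nat.factorial (n-l)))) * (a n n * (1/(2*u)^n)) := by
          ring
  have step2 : ∑ l ∈ range (n+1),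
        (((n - l : ℕ):ℝ) * (u^(n-l) / (Nat.factorial (n-l)))) * (a n n * (1/(2*u)^n))
      = (∑ j ∈ range (n+1), ((j:ℕ):ℝ) * (u^j / (Nat.factorial j))) * (a n n * (1/(2*u)^n)) := by
    rw [← Finset.sum_mul]
    congr 1
    have := Finset.sum_range_reflect (fun j => ((j:ℕ):ℝ) * (u^j / (Nat.factorial j))) (n+1)
    simp only [Nat.add_sub_cancel] at this
    exact this
  have step3 : ∑ j ∈ range (n+1), ((j:ℕ):ℝ) * (u^j / (Nat.factorial j)) ≤ u * Real.exp u := by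
    rw [Finset.sum_range_succ']
    simp only [Nat.cast_zero, zero_mul, add_zero]
    have heach : ∀ i ∈ range n, (((i+1:ℕ)):ℝ) * (u^(i+1) / (Nat.factorial (i+1)))
        = u * (u^i / (Nat.factorial i)) := by
      intro i _
      have : (Nat.factorial (i+1) : ℝ) = ((i:ℝ)+1) * (Nat.factorial i) := by
        rw [Nat.factorial_succ]; push_cast; ring
      rw [this]
      have hfac : (0:ℝ) < (Nat.factorial i : ℝ) := by exact_mod_cast Nat.factorial_pos i
      field_simp
      push_cast; ring
    rw [Finset.sum_congr rfl heach, ← Finset.mul_sum]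
    have := Real.sum_le_exp_of_nonneg hu.le n
    nlinarith [this, hu]
  calc ∑ l ∈ range (n+1), ((n:ℝ) - l) * (a n l * (1/(2*u)^l))
      ≤ (∑ j ∈ range (n+1), ((j:ℕ):ℝ) * (u^j / (Nat.factorial j))) * (a n n * (1/(2*u)^n)) := by
        rw [← step2]; exact step1
    _ ≤ (u * Real.exp u) * (a n n * (1/(2*u)^n)) := by
        apply mul_le_mul_of_nonneg_right step3
        have := a_pos n n
        positivity

end SHaux


namespace SHaux

lemma sh_eq (n : ℕ) (v : ℝ) (hv : 0 < v) :
    sphericalHankel n v = ∑ l ∈ range (n+1),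
      (Real.pi * a n l / 2^(l+1)) * (Real.exp (-v) * v ^ (-((l:ℤ)+1))) := by
  unfold sphericalHankel a
  rw [Finset.mul_sum]
  apply Finset.sum_congr rfl
  intro l _
  have hv' : v ≠ 0 := ne_of_gt hv
  have : v ^ (-((l:ℤ)+1)) = (v ^ (l+1))⁻¹ := by
    rw [show -((l:ℤ)+1) = -((l+1:ℕ):ℤ) by push_cast; ring, zpow_neg, zpow_natCast]
  rw [this]
  field_simp
  ring

lemma hasDerivAt_sh (n : ℕ) (u : ℝ) (hu : 0 < u) :
    HasDerivAt (fun v => sphericalHankel n v)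
      (-(Real.pi * Real.exp (-u) / (2*u*u)) * g n u) u := by
  have hune : u ≠ 0 := ne_of_gt hu
  have hF : HasDerivAt (fun v => ∑ l ∈ range (n+1),
      (Real.pi * a n l / 2^(l+1)) * (Real.exp (-v) * v ^ (-((l:ℤ)+1))))
      (∑ l ∈ range (n+1), (Real.pi * a n l / 2^(l+1)) *
        ((-Real.exp (-u)) * u ^ (-((l:ℤ)+1)) +
          Real.exp (-u) * (((-((l:ℤ)+1)):ℝ) * u ^ ((-((l:ℤ)+1)) - 1)))) u := by
    apply HasDerivAt.fun_sum
    intro l _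
    have hexp : HasDerivAt (fun v : ℝ => Real.exp (-v)) (-Real.exp (-u)) u := by
      exact ((Real.hasDerivAt_exp (-u)).comp u (hasDerivAt_neg u)).congr_deriv (by simp)
    have hz : HasDerivAt (fun v : ℝ => v ^ (-((l:ℤ)+1)))
        ((((-((l:ℤ)+1)):ℝ)) * u ^ ((-((l:ℤ)+1)) - 1)) u := by
      simpa using hasDerivAt_zpow (-((l:ℤ)+1)) u (Or.inl hune)
    exact (hexp.mul hz).const_mul _
  have heq : (fun v => sphericalHankel n v) =ᶠ[nhds u] fun v => ∑ l ∈ range (n+1),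
      (Real.pi * a n l / 2^(l+1)) * (Real.exp (-v) * v ^ (-((l:ℤ)+1))) := by
    filter_upwards [eventually_gt_nhds hu] with v hv
    exact sh_eq n v hv
  have hD := hF.congr_of_eventuallyEq heq
  refine hD.congr_deriv (Eq.symm ?_)
  unfold g
  rw [Finset.mul_sum]
  apply Finset.sum_congr rfl
  intro l _
  have h1 : u ^ (-((l:ℤ)+1)) = (u ^ (l+1))⁻¹ := by
    rw [show -((l:ℤ)+1) = -((l+1:ℕ):ℤ) by push_cast; ring, zpow_neg, zpow_natCast]
  have h2 : u ^ ((-((l:ℤ)+1)) - 1) = (u ^ (l+2))⁻¹ := by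
    rw [show (-((l:ℤ)+1)) - 1 = -((l+2:ℕ):ℤ) by push_cast; ring, zpow_neg, zpow_natCast]
  have h3 : (((-((l:ℤ)+1)):ℝ)) = -((l:ℝ)+1) := by push_cast; ring
  rw [h1, h2, h3]
  field_simp
  ring

end SHaux

open SHaux in
/-- For fixed `u > 0`, `u k_n'(u)/(n k_n(u)) → -1` as `n → ∞`. -/
theorem tendsto_logDeriv_sphericalHankel (u : ℝ) (hu : 0 < u) :
    Tendsto (fun n : ℕ =>
        u * deriv (fun v => sphericalHankel n v) u / ((n : ℝ) * sphericalHankel n u))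
      atTop (nhds (-1)) := by
  have hune : u ≠ 0 := ne_of_gt hu
  have hC : (0:ℝ) < Real.pi * Real.exp (-u) / (2*u) := by
    have := Real.pi_pos; positivity
  have hSpos : ∀ n : ℕ, 0 < S n u := by
    intro n
    apply Finset.sum_pos _ (by simp)
    intro l _
    have := a_pos n l
    have h2u : (0:ℝ) < 2*u := by linarith
    positivity
  have hkS : ∀ n : ℕ, sphericalHankel n u = (Real.pi * Real.exp (-u) / (2*u)) * S n u := by
    intro n; rfl
  have hderiv : ∀ n : ℕ, deriv (fun v => sphericalHankel n v) u
      = -(Real.pi * Real.exp (-u) / (2*u*u)) * g n u := fun n => (hasDerivAt_sh n u hu).deriv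
  have hexpr : ∀ n : ℕ, u * deriv (fun v => sphericalHankel n v) u / ((n:ℝ) * sphericalHankel n u)
      = -(g n u / ((n:ℝ) * S n u)) := by
    intro n
    rw [hderiv, hkS n]
    rw [show u * (-(Real.pi * Real.exp (-u) / (2*u*u)) * g n u)
        = (Real.pi * Real.exp (-u) / (2*u)) * (-(g n u)) from by field_simp]
    rw [show ((n:ℝ)) * ((Real.pi * Real.exp (-u) / (2*u)) * S n u)
        = (Real.pi * Real.exp (-u) / (2*u)) * ((n:ℝ) * S n u) from by ring]
    rw [mul_div_mul_left _ _ (ne_of_gt hC), neg_div]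
  -- the key bound
  set K : ℝ := u + 1 + u * Real.exp u with hK
  have hbound : ∀ n : ℕ, 1 ≤ n → |g n u / ((n:ℝ) * S n u) - 1| ≤ K / n := by
    intro n hn
    have hnpos : (0:ℝ) < n := by exact_mod_cast hn
    have hnS : (0:ℝ) < (n:ℝ) * S n u := mul_pos hnpos (hSpos n)
    have h2u : (0:ℝ) < 2*u := by linarith
    have hdiff : g n u - (n:ℝ) * S n u
        = ∑ l ∈ Finset.range (n+1), a n l * ((((l:ℝ)+1+u) - n) * (1/(2*u)^l)) := by
      unfold g S
      rw [Finset.mul_sum, ← Finset.sum_sub_distrib]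
      apply Finset.sum_congr rfl
      intro l _
      ring
    have habs : |g n u - (n:ℝ) * S n u| ≤ K * S n u := by
      rw [hdiff]
      calc |∑ l ∈ Finset.range (n+1), a n l * ((((l:ℝ)+1+u) - n) * (1/(2*u)^l))|
          ≤ ∑ l ∈ Finset.range (n+1), |a n l * ((((l:ℝ)+1+u) - n) * (1/(2*u)^l))| :=
            Finset.abs_sum_le_sum_abs _ _
        _ ≤ ∑ l ∈ Finset.range (n+1),
              ((u+1) * (a n l * (1/(2*u)^l)) + ((n:ℝ)-l) * (a n l * (1/(2*u)^l))) := by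
            apply Finset.sum_le_sum
            intro l hl
            have hln : l ≤ n := by have := Finset.mem_range.mp hl; omega
            have hnl : (0:ℝ) ≤ (n:ℝ) - l := by
              have : (l:ℝ) ≤ n := by exact_mod_cast hln
              linarith
            have hal : (0:ℝ) < a n l := a_pos n l
            have hxl : (0:ℝ) < 1/(2*u)^l := by positivity
            rw [abs_mul, abs_mul, abs_of_pos hal]
            have habs1 : |((l:ℝ)+1+u) - n| ≤ (u+1) + ((n:ℝ)-l) := by
              rw [abs_le]; constructor <;> linarith
            calc a n l * (|((l:ℝ)+1+u) - n| * |1/(2*u)^l|)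
                = (a n l * |1/(2*u)^l|) * |((l:ℝ)+1+u) - n| := by ring
              _ ≤ (a n l * |1/(2*u)^l|) * ((u+1) + ((n:ℝ)-l)) := by
                  apply mul_le_mul_of_nonneg_left habs1 (by positivity)
              _ = (u+1) * (a n l * |1/(2*u)^l|) + ((n:ℝ)-l) * (a n l * |1/(2*u)^l|) := by ring
              _ = (u+1) * (a n l * (1/(2*u)^l)) + ((n:ℝ)-l) * (a n l * (1/(2*u)^l)) := by
                  rw [abs_of_pos hxl]
        _ = (u+1) * S n u + ∑ l ∈ Finset.range (n+1), ((n:ℝ)-l) * (a n l * (1/(2*u)^l)) := by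
            rw [Finset.sum_add_distrib, ← Finset.mul_sum]
            rfl
        _ ≤ (u+1) * S n u + (u * Real.exp u) * (a n n * (1/(2*u)^n)) := by
            have := sum_tail_le n u hu
            linarith
        _ ≤ (u+1) * S n u + (u * Real.exp u) * S n u := by
            have hle : a n n * (1/(2*u)^n) ≤ S n u := by
              apply Finset.single_le_sum (f := fun l => a n l * (1/(2*u)^l))
              · intro l _
                have := a_pos n l
                positivity
              · exact Finset.self_mem_range_succ n
            have hue : (0:ℝ) ≤ u * Real.exp u := by positivity
            nlinarith
        _ = K * S n u := by rw [hK]; ring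
    have heq2 : g n u / ((n:ℝ) * S n u) - 1 = (g n u - (n:ℝ) * S n u) / ((n:ℝ) * S n u) := by
      rw [sub_div, div_self (ne_of_gt hnS)]
    rw [heq2, abs_div, abs_of_pos hnS, div_le_div_iff₀ hnS hnpos]
    nlinarith [habs, hSpos n, hnpos]
  have h0 : Tendsto (fun n : ℕ => g n u / ((n:ℝ) * S n u) - 1) atTop (nhds 0) := by
    apply squeeze_zero_norm' _ (tendsto_const_div_atTop_nhds_zero_nat K)
    filter_upwards [eventually_ge_atTop 1] with n hn
    simpa [Real.norm_eq_abs] using hbound n hn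
  have main : Tendsto (fun n : ℕ => g n u / ((n:ℝ) * S n u)) atTop (nhds 1) := by
    simpa using h0.add_const 1
  have mainneg := main.neg
  refine Tendsto.congr (fun n => (hexpr n).symm) ?_
  simpa using mainneg
end

section
/- For fixed u > 0 and fixed ε > 0, the Kirkwood harmonic coefficients M_n(u) := (ε(n+1)k_n(u) + u k_n'(u)) / (ε n k_n(u) − u k_n'(u)) converge as n → ∞ to γ := (ε−1)/(ε+1). -/
open Filter

/-- The Kirkwood harmonic coefficients for dielectric ratio `ε`. -/
noncomputable def kirkwoodM (ε : ℝ) (n : ℕ) (u : ℝ) : ℝ :=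
  (ε * ((n : ℝ) + 1) * sphericalHankel n u + u * deriv (fun v => sphericalHankel n v) u) /
    (ε * (n : ℝ) * sphericalHankel n u - u * deriv (fun v => sphericalHankel n v) u)

noncomputable def aCoef (n l : ℕ) : ℝ :=
  (Nat.factorial (n + l) : ℝ) / (Nat.factorial l * Nat.factorial (n - l))

noncomputable def Ssum (n : ℕ) (u : ℝ) : ℝ :=
  ∑ l ∈ Finset.range (n + 1), aCoef n l * (1 / (2 * u) ^ l)

noncomputable def Tsum (n : ℕ) (u : ℝ) : ℝ :=
  ∑ l ∈ Finset.range (n + 1), aCoef n l * ((l : ℝ) + 1) * (1 / (2 * u) ^ l)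

lemma hankel_eq (n : ℕ) (u : ℝ) :
    sphericalHankel n u = (Real.pi * Real.exp (-u) / (2 * u)) * Ssum n u := rfl

lemma aCoef_pos (n l : ℕ) : 0 < aCoef n l := by
  unfold aCoef; positivity

lemma Ssum_pos (n : ℕ) {u : ℝ} (hu : 0 < u) : 0 < Ssum n u := by
  apply Finset.sum_pos
  · intro l _
    have := aCoef_pos n l
    positivity
  · exact ⟨0, Finset.mem_range.2 (Nat.succ_pos n)⟩
lemma hankel_hasDerivAt (n : ℕ) {u : ℝ} (hu : 0 < u) :
    HasDerivAt (fun v => sphericalHankel n v)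
      (∑ l ∈ Finset.range (n + 1), (Real.pi * aCoef n l / 2 ^ (l + 1)) *
        (Real.exp (-u) * (-1) * u ^ (-(l : ℤ) - 1) +
          Real.exp (-u) * (((-(l : ℤ) - 1 : ℤ) : ℝ) * u ^ (-(l : ℤ) - 1 - 1)))) u := by
  have key : ∀ l : ℕ, HasDerivAt (fun v : ℝ => Real.exp (-v) * v ^ (-(l : ℤ) - 1))
      (Real.exp (-u) * (-1) * u ^ (-(l : ℤ) - 1) +
        Real.exp (-u) * (((-(l : ℤ) - 1 : ℤ) : ℝ) * u ^ (-(l : ℤ) - 1 - 1))) u := by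
    intro l
    have h1 : HasDerivAt (fun v : ℝ => Real.exp (-v)) (Real.exp (-u) * (-1)) u := by
      simpa using ((hasDerivAt_id u).neg).exp
    have h2 : HasDerivAt (fun v : ℝ => v ^ (-(l : ℤ) - 1))
        (((-(l : ℤ) - 1 : ℤ) : ℝ) * u ^ (-(l : ℤ) - 1 - 1)) u :=
      hasDerivAt_zpow _ _ (Or.inl hu.ne')
    simpa using h1.fun_mul h2
  have hsum := HasDerivAt.fun_sum
    (fun l (_ : l ∈ Finset.range (n + 1)) => ((key l).const_mul (Real.pi * aCoef n l / 2 ^ (l + 1))))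
  apply hsum.congr_of_eventuallyEq
  have hnb : ∀ᶠ v in nhds u, 0 < v := eventually_gt_nhds hu
  filter_upwards [hnb] with v hv
  unfold sphericalHankel
  rw [Finset.mul_sum]
  apply Finset.sum_congr rfl
  intro l _
  have hv' : v ≠ 0 := hv.ne'
  have hz : v ^ (-(l : ℤ) - 1) = (v ^ (l + 1))⁻¹ := by
    rw [show (-(l : ℤ) - 1) = -((l + 1 : ℕ) : ℤ) by push_cast; ring, zpow_neg, zpow_natCast]
  rw [hz]
  unfold aCoef
  field_simp
  ring

lemma u_mul_deriv (n : ℕ) {u : ℝ} (hu : 0 < u) :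
    u * deriv (fun v => sphericalHankel n v) u
      = (Real.pi * Real.exp (-u) / (2 * u)) * (-(u * Ssum n u) - Tsum n u) := by
  rw [(hankel_hasDerivAt n hu).deriv]
  have hR : -(u * Ssum n u) - Tsum n u = ∑ l ∈ Finset.range (n + 1),
      (-(u * (aCoef n l * (1 / (2 * u) ^ l))) - aCoef n l * ((l : ℝ) + 1) * (1 / (2 * u) ^ l)) := by
    unfold Ssum Tsum
    rw [Finset.sum_sub_distrib, Finset.sum_neg_distrib, ← Finset.mul_sum]
  rw [hR, Finset.mul_sum, Finset.mul_sum]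
  apply Finset.sum_congr rfl
  intro l _
  have hz1 : u ^ (-(l : ℤ) - 1) = (u ^ (l + 1))⁻¹ := by
    rw [show (-(l : ℤ) - 1) = -((l + 1 : ℕ) : ℤ) by push_cast; ring, zpow_neg, zpow_natCast]
  have hz2 : u ^ (-(l : ℤ) - 1 - 1) = (u ^ (l + 2))⁻¹ := by
    rw [show (-(l : ℤ) - 1 - 1) = -((l + 2 : ℕ) : ℤ) by push_cast; ring, zpow_neg, zpow_natCast]
  rw [hz1, hz2]
  push_cast
  field_simp
  ring

lemma Tsum_le (n : ℕ) {u : ℝ} (hu : 0 < u) : Tsum n u ≤ ((n : ℝ) + 1) * Ssum n u := by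
  unfold Tsum Ssum
  rw [Finset.mul_sum]
  apply Finset.sum_le_sum
  intro l hl
  have hl' : (l : ℝ) + 1 ≤ (n : ℝ) + 1 := by
    have := Finset.mem_range.1 hl
    have : (l : ℝ) ≤ n := by exact_mod_cast Nat.lt_succ_iff.1 this
    linarith
  have h2 : 0 < aCoef n l * (1 / (2 * u) ^ l) := by
    have := aCoef_pos n l; positivity
  nlinarith

lemma factorial_ineq (n j : ℕ) (hj : j ≤ n) :
    (2 * n - j).factorial * n.factorial ≤ (2 * n).factorial * (n - j).factorial := by
  have h2 : j ≤ 2 * n := by omega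
  have e1 : (2 * n - j).factorial * (2 * n).descFactorial j = (2 * n).factorial :=
    Nat.factorial_mul_descFactorial h2
  have e2 : (n - j).factorial * n.descFactorial j = n.factorial :=
    Nat.factorial_mul_descFactorial hj
  have hd : n.descFactorial j ≤ (2 * n).descFactorial j :=
    Nat.descFactorial_le _ (by omega)
  calc (2 * n - j).factorial * n.factorial
      = (2 * n - j).factorial * ((n - j).factorial * n.descFactorial j) := by rw [e2]
    _ ≤ (2 * n - j).factorial * ((n - j).factorial * (2 * n).descFactorial j) := by
        exact Nat.mul_le_mul_left _ (Nat.mul_le_mul_left _ hd)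
    _ = ((2 * n - j).factorial * (2 * n).descFactorial j) * (n - j).factorial := by ring
    _ = (2 * n).factorial * (n - j).factorial := by rw [e1]

lemma aCoef_bound (n j : ℕ) (hj : j ≤ n) :
    aCoef n (n - j) ≤ aCoef n n / (j.factorial : ℝ) := by
  unfold aCoef
  rw [show n + (n - j) = 2 * n - j by omega, show n - (n - j) = j by omega,
    show n + n = 2 * n by ring, Nat.sub_self, Nat.factorial_zero]
  have h1 : (0 : ℝ) < (n - j).factorial * j.factorial := by positivity
  have h2 : (0 : ℝ) < ((n.factorial : ℝ) * 1) * j.factorial := by positivity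
  rw [div_div, div_le_div_iff₀ (by exact_mod_cast h1) (by exact_mod_cast h2)]
  have hR : ((2 * n - j).factorial : ℝ) * n.factorial ≤ ((2 * n).factorial : ℝ) * (n - j).factorial := by
    exact_mod_cast factorial_ineq n j hj
  have hfj : (0 : ℝ) ≤ (j.factorial : ℝ) := by positivity
  have key := mul_le_mul_of_nonneg_right hR hfj
  push_cast
  nlinarith [key]

lemma single_le_Ssum (n : ℕ) {u : ℝ} (hu : 0 < u) :
    aCoef n n * (1 / (2 * u) ^ n) ≤ Ssum n u := by
  apply Finset.single_le_sum (f := fun l => aCoef n l * (1 / (2 * u) ^ l))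
  · intro l _
    have := aCoef_pos n l
    positivity
  · exact Finset.self_mem_range_succ n

lemma exp_sum_bound {u : ℝ} (hu : 0 < u) (n : ℕ) :
    ∑ j ∈ Finset.range (n + 1), (j : ℝ) * (2 * u) ^ j / (j.factorial : ℝ)
      ≤ 2 * u * Real.exp (2 * u) := by
  rw [Finset.sum_range_succ']
  simp only [Nat.cast_zero, zero_mul, Nat.factorial_zero, Nat.cast_one, zero_div, add_zero]
  have hcong : ∀ i ∈ Finset.range n,
      ((i + 1 : ℕ) : ℝ) * (2 * u) ^ (i + 1) / ((i + 1).factorial : ℝ)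
        = 2 * u * ((2 * u) ^ i / (i.factorial : ℝ)) := by
    intro i _
    rw [Nat.factorial_succ]
    push_cast
    have h1 : (0:ℝ) < (i.factorial : ℝ) := by positivity
    field_simp
    ring
  rw [Finset.sum_congr rfl hcong, ← Finset.mul_sum]
  have hle : ∑ i ∈ Finset.range n, (2 * u) ^ i / (i.factorial : ℝ) ≤ Real.exp (2 * u) :=
    Real.sum_le_exp_of_nonneg (by positivity) n
  have : (0:ℝ) ≤ 2 * u := by linarith
  exact mul_le_mul_of_nonneg_left hle this

lemma key_lower (n : ℕ) {u : ℝ} (hu : 0 < u) :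
    ((n : ℝ) + 1) * Ssum n u - Tsum n u ≤ (2 * u * Real.exp (2 * u)) * Ssum n u := by
  have hB_le : aCoef n n * (1 / (2 * u) ^ n) ≤ Ssum n u := single_le_Ssum n hu
  have hB_nonneg : (0:ℝ) ≤ aCoef n n * (1 / (2 * u) ^ n) := by
    have := aCoef_pos n n; positivity
  have h1 : ((n : ℝ) + 1) * Ssum n u - Tsum n u
      = ∑ l ∈ Finset.range (n + 1), ((n : ℝ) - l) * (aCoef n l * (1 / (2 * u) ^ l)) := by
    unfold Ssum Tsum
    rw [Finset.mul_sum, ← Finset.sum_sub_distrib]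
    exact Finset.sum_congr rfl fun l _ => by ring
  have h2 := Finset.sum_range_reflect
    (fun k => ((n : ℝ) - k) * (aCoef n k * (1 / (2 * u) ^ k))) (n + 1)
  simp only [Nat.add_sub_cancel] at h2
  rw [h1, ← h2]
  have hstep : ∀ j ∈ Finset.range (n + 1),
      ((n : ℝ) - ((n - j : ℕ) : ℝ)) * (aCoef n (n - j) * (1 / (2 * u) ^ (n - j)))
        ≤ ((j : ℝ) * (2 * u) ^ j / (j.factorial : ℝ)) * (aCoef n n * (1 / (2 * u) ^ n)) := by
    intro j hj
    have hjn : j ≤ n := Nat.lt_succ_iff.1 (Finset.mem_range.1 hj)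
    have hc : ((n - j : ℕ) : ℝ) = (n : ℝ) - j := by
      exact Nat.cast_sub hjn
    have hp : (1 : ℝ) / (2 * u) ^ (n - j) = (2 * u) ^ j / (2 * u) ^ n := by
      rw [div_eq_div_iff (by positivity) (by positivity), one_mul, ← pow_add]
      congr 1
      omega
    rw [hc, hp, show (n:ℝ) - ((n:ℝ) - j) = (j:ℝ) by ring]
    have hbnd := aCoef_bound n j hjn
    have hnn : (0:ℝ) ≤ (j : ℝ) * ((2 * u) ^ j / (2 * u) ^ n) := by positivity
    calc (j : ℝ) * (aCoef n (n - j) * ((2 * u) ^ j / (2 * u) ^ n))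
        = ((j : ℝ) * ((2 * u) ^ j / (2 * u) ^ n)) * aCoef n (n - j) := by ring
      _ ≤ ((j : ℝ) * ((2 * u) ^ j / (2 * u) ^ n)) * (aCoef n n / (j.factorial : ℝ)) :=
          mul_le_mul_of_nonneg_left hbnd hnn
      _ = ((j : ℝ) * (2 * u) ^ j / (j.factorial : ℝ)) * (aCoef n n * (1 / (2 * u) ^ n)) := by
          ring
  calc ∑ j ∈ Finset.range (n + 1),
        ((n : ℝ) - ((n - j : ℕ) : ℝ)) * (aCoef n (n - j) * (1 / (2 * u) ^ (n - j)))
      ≤ ∑ j ∈ Finset.range (n + 1),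
        ((j : ℝ) * (2 * u) ^ j / (j.factorial : ℝ)) * (aCoef n n * (1 / (2 * u) ^ n)) :=
        Finset.sum_le_sum hstep
    _ = (∑ j ∈ Finset.range (n + 1), (j : ℝ) * (2 * u) ^ j / (j.factorial : ℝ)) *
        (aCoef n n * (1 / (2 * u) ^ n)) := by rw [Finset.sum_mul]
    _ ≤ (2 * u * Real.exp (2 * u)) * Ssum n u := by
        apply mul_le_mul (exp_sum_bound hu n) hB_le hB_nonneg (by positivity)

lemma kirkwoodM_eq (ε : ℝ) (n : ℕ) {u : ℝ} (hu : 0 < u) :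
    kirkwoodM ε n u =
      (ε - u / ((n : ℝ) + 1) - Tsum n u / (((n : ℝ) + 1) * Ssum n u)) /
        (ε * ((n : ℝ) / ((n : ℝ) + 1)) + u / ((n : ℝ) + 1) +
          Tsum n u / (((n : ℝ) + 1) * Ssum n u)) := by
  have hS := Ssum_pos n hu
  have hN : (0 : ℝ) < (n : ℝ) + 1 := by positivity
  have hC : (0 : ℝ) < Real.pi * Real.exp (-u) / (2 * u) := by
    have := Real.pi_pos; positivity
  unfold kirkwoodM
  rw [hankel_eq, u_mul_deriv n hu]
  set C := Real.pi * Real.exp (-u) / (2 * u) with hCdef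
  set S := Ssum n u with hSdef
  set T := Tsum n u with hTdef
  have e1 : ε * ((n : ℝ) + 1) * (C * S) + C * (-(u * S) - T)
      = (C * (((n : ℝ) + 1) * S)) *
        (ε - u / ((n : ℝ) + 1) - T / (((n : ℝ) + 1) * S)) := by
    field_simp
    ring
  have e2 : ε * (n : ℝ) * (C * S) - C * (-(u * S) - T)
      = (C * (((n : ℝ) + 1) * S)) *
        (ε * ((n : ℝ) / ((n : ℝ) + 1)) + u / ((n : ℝ) + 1) + T / (((n : ℝ) + 1) * S)) := by
    field_simp
    ring
  rw [e1, e2, mul_div_mul_left _ _ (ne_of_gt (by positivity))]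

/-- For fixed `u > 0` and `ε > 0`, `M_n(u) → (ε-1)/(ε+1)` as `n → ∞`. -/
theorem tendsto_kirkwoodM (u ε : ℝ) (hu : 0 < u) (hε : 0 < ε) :
    Tendsto (fun n : ℕ => kirkwoodM ε n u) atTop (nhds ((ε - 1) / (ε + 1))) := by
  have h0 := tendsto_one_div_add_atTop_nhds_zero_nat (𝕜 := ℝ)
  have hq : Tendsto (fun n : ℕ => Tsum n u / (((n : ℝ) + 1) * Ssum n u)) atTop (nhds 1) := by
    have hK : Tendsto (fun n : ℕ => 1 - (2 * u * Real.exp (2 * u)) * (1 / ((n : ℝ) + 1)))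
        atTop (nhds 1) := by
      have := h0.const_mul (2 * u * Real.exp (2 * u))
      simpa using tendsto_const_nhds.sub this
    apply tendsto_of_tendsto_of_tendsto_of_le_of_le hK tendsto_const_nhds
    · intro n
      have hS := Ssum_pos n hu
      have hN : (0 : ℝ) < (n : ℝ) + 1 := by positivity
      rw [le_div_iff₀ (by positivity)]
      have hlow := key_lower n hu
      have heq : (1 - (2 * u * Real.exp (2 * u)) * (1 / ((n : ℝ) + 1))) *
          (((n : ℝ) + 1) * Ssum n u)
          = ((n : ℝ) + 1) * Ssum n u - (2 * u * Real.exp (2 * u)) * Ssum n u := by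
        field_simp
      rw [heq]
      linarith
    · intro n
      have hS := Ssum_pos n hu
      have hN : (0 : ℝ) < (n : ℝ) + 1 := by positivity
      rw [div_le_one (by positivity)]
      have := Tsum_le n hu
      linarith
  have hfrac : Tendsto (fun n : ℕ => u / ((n : ℝ) + 1)) atTop (nhds 0) := by
    have := h0.const_mul u
    simpa [mul_one_div, div_eq_mul_inv] using this
  have hnn : Tendsto (fun n : ℕ => (n : ℝ) / ((n : ℝ) + 1)) atTop (nhds 1) := by
    have h1 : Tendsto (fun n : ℕ => 1 - 1 / ((n : ℝ) + 1)) atTop (nhds 1) := by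
      simpa using tendsto_const_nhds.sub h0
    apply h1.congr
    intro n
    have hN : ((n : ℝ) + 1) ≠ 0 := by positivity
    field_simp
    ring
  have hnum : Tendsto (fun n : ℕ => ε - u / ((n : ℝ) + 1) -
      Tsum n u / (((n : ℝ) + 1) * Ssum n u)) atTop (nhds (ε - 1)) := by
    simpa using (tendsto_const_nhds.sub hfrac).sub hq
  have hden : Tendsto (fun n : ℕ => ε * ((n : ℝ) / ((n : ℝ) + 1)) + u / ((n : ℝ) + 1) +
      Tsum n u / (((n : ℝ) + 1) * Ssum n u)) atTop (nhds (ε + 1)) := by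
    have := ((hnn.const_mul ε).add hfrac).add hq
    simpa [mul_one] using this
  have hne : ε + 1 ≠ 0 := by positivity
  exact Tendsto.congr (fun n => (kirkwoodM_eq ε n hu).symm) (hnum.div hden hne)
end

section
/- Large-n asymptotics of the logarithmic derivative: for fixed u > 0, u·k_n'(u)/k_n(u) = −n − 1 − u²/(2n) + O(1/n²) as n → ∞; in particular n → ∞ limit of (u k_n'(u)/k_n(u) + n + 1) equals 0. -/
open Filter

noncomputable def shA (n l : ℕ) : ℝ :=
  (Nat.factorial (n + l) : ℝ) / (Nat.factorial l * Nat.factorial (n - l))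

lemma shA_pos (n l : ℕ) : 0 < shA n l := by
  unfold shA
  positivity

lemma shA_zero (n : ℕ) : shA n 0 = 1 := by
  unfold shA
  simp [div_self, Nat.cast_ne_zero.mpr n.factorial_ne_zero]

lemma shA_one (n : ℕ) (hn : 1 ≤ n) : shA n 1 = (n:ℝ) * ((n:ℝ)+1) := by
  unfold shA
  have hfac : n.factorial = n * (n-1).factorial := by
    conv_lhs => rw [show n = (n-1)+1 from by omega]
    rw [Nat.factorial_succ, show n - 1 + 1 = n from by omega]
  rw [show (n+1).factorial = (n+1) * n.factorial from Nat.factorial_succ n, hfac]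
  have h2 : ((n-1).factorial : ℝ) ≠ 0 := by positivity
  push_cast [Nat.factorial_one]
  field_simp

lemma shA_succ {n l : ℕ} (h : l < n) :
    shA n (l+1) * ((l:ℝ)+1) = shA n l * (((n:ℝ)+l+1) * ((n:ℝ)-l)) := by
  unfold shA
  rw [show ((n:ℝ) - l) = ((n - l : ℕ) : ℝ) from (Nat.cast_sub h.le).symm]
  have h1 : (n + (l+1)) = (n + l) + 1 := by omega
  have h2 : (n - l) = (n - (l+1)) + 1 := by omega
  rw [h1, h2, Nat.factorial_succ, Nat.factorial_succ, Nat.factorial_succ]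
  have f1 : ((n+l).factorial : ℝ) ≠ 0 := by positivity
  have f2 : (l.factorial : ℝ) ≠ 0 := by positivity
  have f3 : (((n - (l+1)).factorial : ℕ) : ℝ) ≠ 0 := by positivity
  push_cast
  field_simp

lemma coeff1 {n l : ℕ} (h : l < n) :
    ((n:ℝ) - l) * shA n l - shA n (l+1) / 2
      = -(shA n l * (((n:ℝ)-l) * ((n:ℝ)-l-1)) / (2*((l:ℝ)+1))) := by
  have h1 := shA_succ h
  have hl1 : ((l:ℝ)+1) ≠ 0 := by positivity
  have : shA n (l+1) = shA n l * (((n:ℝ)+l+1) * ((n:ℝ)-l)) / ((l:ℝ)+1) := by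
    field_simp at h1 ⊢
    linarith [h1]
  rw [this]
  field_simp
  ring

lemma coeff2 {n l : ℕ} (h2 : l + 2 ≤ n) (hn : 0 < n) :
    shA n (l+2) / (8*(n:ℝ)) - shA n l * (((n:ℝ)-l) * ((n:ℝ)-l-1)) / (2*((l:ℝ)+1))
      = shA n l * (((n:ℝ)-l) * ((n:ℝ)-l-1) * ((((n:ℝ)-l-1) * ((n:ℝ)-l-2)) - 2*n))
          / (8*(n:ℝ)*((l:ℝ)+1)*((l:ℝ)+2)) := by
  have ha : l < n := by omega
  have hb : l + 1 < n := by omega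
  have h1 := shA_succ ha
  have hsucc := shA_succ hb
  have hl1 : ((l:ℝ)+1) ≠ 0 := by positivity
  have hl2 : ((l:ℝ)+2) ≠ 0 := by positivity
  have hnn : ((n:ℝ)) ≠ 0 := by positivity
  have e1 : shA n (l+1) = shA n l * (((n:ℝ)+l+1) * ((n:ℝ)-l)) / ((l:ℝ)+1) := by
    field_simp at h1 ⊢; linarith [h1]
  have e2 : shA n (l+2) = shA n (l+1) * (((n:ℝ)+l+2) * ((n:ℝ)-l-1)) / ((l:ℝ)+2) := by
    have : ((l:ℝ)+1+1) = (l:ℝ)+2 := by ring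
    rw [← this]
    push_cast at hsucc ⊢
    field_simp at hsucc ⊢
    linarith [hsucc]
  rw [e2, e1]
  field_simp
  ring

noncomputable def shP (n : ℕ) (u : ℝ) : ℝ :=
  ∑ l ∈ Finset.range (n + 1), shA n l * (1 / (2 * u) ^ l)

noncomputable def shT (n : ℕ) (u : ℝ) : ℝ :=
  ∑ l ∈ Finset.range (n + 1), (l : ℝ) * (shA n l * (1 / (2 * u) ^ l))

noncomputable def shQ (n : ℕ) (u : ℝ) : ℝ :=
  -u + u^2/(2*(n:ℝ)) + u^2 * (shA n 1 * (1/(2*u))) / (2*(n:ℝ))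
    + ∑ l ∈ Finset.range (n-1), (shA n l * (1 / (2*u)^l)) *
        ((((n:ℝ)-l) * ((n:ℝ)-l-1) * ((((n:ℝ)-l-1)*((n:ℝ)-l-2)) - 2*(n:ℝ)))
          / (8*(n:ℝ)*((l:ℝ)+1)*((l:ℝ)+2)))

lemma key_identity (n : ℕ) (hn : 2 ≤ n) {u : ℝ} (hu : 0 < u) :
    ((n:ℝ) - u) * shP n u - shT n u + u^2/(2*(n:ℝ)) * shP n u = shQ n u := by
  have hu' : u ≠ 0 := hu.ne'
  have h2u : (2:ℝ) * u ≠ 0 := by positivity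
  -- Step 1: (n-u)P - T
  have h1 : ((n:ℝ) - u) * shP n u - shT n u
      = (∑ l ∈ Finset.range (n+1), ((n:ℝ)-l) * (shA n l * (1 / (2*u)^l)))
        - ∑ l ∈ Finset.range (n+1), u * (shA n l * (1 / (2*u)^l)) := by
    rw [shP, shT, Finset.mul_sum, ← Finset.sum_sub_distrib, ← Finset.sum_sub_distrib]
    exact Finset.sum_congr rfl fun l _ => by ring
  have h2 : ∑ l ∈ Finset.range (n+1), ((n:ℝ)-l) * (shA n l * (1 / (2*u)^l))
      = ∑ l ∈ Finset.range n, ((n:ℝ)-l) * (shA n l * (1 / (2*u)^l)) := by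
    rw [Finset.sum_range_succ]; simp
  have h3 : ∑ l ∈ Finset.range (n+1), u * (shA n l * (1 / (2*u)^l))
      = u + ∑ l ∈ Finset.range n, shA n (l+1) * (1 / (2*u)^l) / 2 := by
    rw [Finset.sum_range_succ']
    rw [shA_zero]
    have : u * ((1:ℝ) * (1 / (2*u)^0)) = u := by simp
    rw [this, add_comm]
    congr 1
    refine Finset.sum_congr rfl fun l _ => ?_
    rw [pow_succ]
    field_simp
  have h4 : ((n:ℝ) - u) * shP n u - shT n u
      = -u + ∑ l ∈ Finset.range n,
          -(shA n l * (((n:ℝ)-l) * ((n:ℝ)-l-1)) / (2*((l:ℝ)+1))) * (1 / (2*u)^l) := by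
    rw [h1, h2, h3]
    have : ∀ l ∈ Finset.range n,
        ((n:ℝ)-l) * (shA n l * (1 / (2*u)^l)) - shA n (l+1) * (1 / (2*u)^l) / 2
          = -(shA n l * (((n:ℝ)-l) * ((n:ℝ)-l-1)) / (2*((l:ℝ)+1))) * (1 / (2*u)^l) := by
      intro l hl
      rw [Finset.mem_range] at hl
      have := coeff1 hl
      calc ((n:ℝ)-l) * (shA n l * (1 / (2*u)^l)) - shA n (l+1) * (1 / (2*u)^l) / 2
          = (((n:ℝ) - l) * shA n l - shA n (l+1) / 2) * (1 / (2*u)^l) := by ring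
        _ = _ := by rw [this]
    rw [← Finset.sum_congr rfl this, Finset.sum_sub_distrib]
    ring
  -- last term of the range-n sum vanishes
  have h5 : ∑ l ∈ Finset.range n,
        -(shA n l * (((n:ℝ)-l) * ((n:ℝ)-l-1)) / (2*((l:ℝ)+1))) * (1 / (2*u)^l)
      = ∑ l ∈ Finset.range (n-1),
          -(shA n l * (((n:ℝ)-l) * ((n:ℝ)-l-1)) / (2*((l:ℝ)+1))) * (1 / (2*u)^l) := by
    refine (Finset.sum_subset (Finset.range_subset_range.2 (by omega)) ?_).symm
    intro l hl hl'
    rw [Finset.mem_range] at hl hl'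
    have hln : l = n - 1 := by omega
    have hc : ((n:ℝ) - (l:ℝ) - 1) = 0 := by
      subst hln
      rw [Nat.cast_sub (by omega : 1 ≤ n)]
      push_cast
      ring
    rw [hc]
    simp
  -- Step 2: expand u^2/(2n) * P
  have h6 : u^2/(2*(n:ℝ)) * shP n u
      = u^2/(2*(n:ℝ)) + u^2 * (shA n 1 * (1/(2*u))) / (2*(n:ℝ))
        + ∑ l ∈ Finset.range (n-1), shA n (l+2) * (1 / (2*u)^l) / (8*(n:ℝ)) := by
    have hgen : ∀ (f : ℕ → ℝ) (m : ℕ), ∑ l ∈ Finset.range (m+2), f l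
        = f 0 + f 1 + ∑ l ∈ Finset.range m, f (l+2) := by
      intro f m
      rw [Finset.sum_range_succ', Finset.sum_range_succ']
      ring
    have hsplit : shP n u = shA n 0 * (1 / (2*u)^0) + shA n 1 * (1 / (2*u)^1)
        + ∑ l ∈ Finset.range (n-1), shA n (l+2) * (1 / (2*u)^(l+2)) := by
      rw [shP, show n + 1 = (n-1) + 2 from by omega]
      exact hgen _ _
    rw [hsplit, shA_zero, mul_add, mul_add, Finset.mul_sum]
    have hnn : ((n:ℝ)) ≠ 0 := by positivity
    have : ∀ l ∈ Finset.range (n-1),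
        u^2/(2*(n:ℝ)) * (shA n (l+2) * (1 / (2*u)^(l+2)))
          = shA n (l+2) * (1 / (2*u)^l) / (8*(n:ℝ)) := by
      intro l _
      rw [pow_succ, pow_succ]
      field_simp
      ring
    rw [Finset.sum_congr rfl this, pow_zero, pow_one]
    field_simp
    congr 3
    funext x
    ring
  rw [h4, h5, h6, shQ]
  have : ∀ l ∈ Finset.range (n-1),
      -(shA n l * (((n:ℝ)-l) * ((n:ℝ)-l-1)) / (2*((l:ℝ)+1))) * (1 / (2*u)^l)
        + shA n (l+2) * (1 / (2*u)^l) / (8*(n:ℝ))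
      = (shA n l * (1 / (2*u)^l)) *
        ((((n:ℝ)-l) * ((n:ℝ)-l-1) * ((((n:ℝ)-l-1)*((n:ℝ)-l-2)) - 2*(n:ℝ)))
          / (8*(n:ℝ)*((l:ℝ)+1)*((l:ℝ)+2))) := by
    intro l hl
    rw [Finset.mem_range] at hl
    have hc2 := coeff2 (by omega : l + 2 ≤ n) (by omega : 0 < n)
    calc -(shA n l * (((n:ℝ)-l) * ((n:ℝ)-l-1)) / (2*((l:ℝ)+1))) * (1 / (2*u)^l)
          + shA n (l+2) * (1 / (2*u)^l) / (8*(n:ℝ))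
        = (shA n (l+2) / (8*(n:ℝ))
            - shA n l * (((n:ℝ)-l) * ((n:ℝ)-l-1)) / (2*((l:ℝ)+1))) * (1 / (2*u)^l) := by
          ring
      _ = _ := by rw [hc2]; ring
  have hsum := Finset.sum_congr rfl this
  rw [Finset.sum_add_distrib] at hsum
  linarith [hsum]

lemma nat_ineq1 (n : ℕ) : ∀ j, j ≤ n →
    2^j * ((2*n - j).factorial * n.factorial) ≤ (n - j).factorial * (2*n).factorial := by
  intro j
  induction j with
  | zero => intro _; simp [Nat.mul_comm]
  | succ j ih =>
    intro hj
    have h1 := ih (by omega)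
    have hpos : 0 < 2*n - j := by omega
    apply Nat.le_of_mul_le_mul_right _ hpos
    calc 2^(j+1) * ((2*n - (j+1)).factorial * n.factorial) * (2*n - j)
        = 2 * (2^j * ((2*n - j).factorial * n.factorial)) := by
          rw [show 2*n - j = (2*n - (j+1)) + 1 from by omega, Nat.factorial_succ]
          ring
      _ ≤ 2 * ((n - j).factorial * (2*n).factorial) := Nat.mul_le_mul le_rfl h1
      _ = (2*(n-j)) * ((n - (j+1)).factorial * (2*n).factorial) := by
          rw [show n - j = (n - (j+1)) + 1 from by omega, Nat.factorial_succ]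
          ring
      _ ≤ (2*n - j) * ((n - (j+1)).factorial * (2*n).factorial) :=
          Nat.mul_le_mul (by omega) le_rfl
      _ = (n - (j+1)).factorial * (2*n).factorial * (2*n - j) := by ring

lemma nat_ineq2 (l j : ℕ) : (l + j + 1) * (l + j + 2) ≤ 4^j * ((l+1)*(l+2)) := by
  have h1 : l + j + 1 ≤ (j+1)*(l+1) := by nlinarith
  have h2 : l + j + 2 ≤ (j+1)*(l+2) := by nlinarith
  have h3 : j + 1 ≤ 2^j := Nat.lt_two_pow_self (n := j)
  calc (l+j+1)*(l+j+2) ≤ ((j+1)*(l+1))*((j+1)*(l+2)) := Nat.mul_le_mul h1 h2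
    _ = (j+1)*(j+1)*((l+1)*(l+2)) := by ring
    _ ≤ (2^j)*(2^j)*((l+1)*(l+2)) := Nat.mul_le_mul (Nat.mul_le_mul h3 h3) le_rfl
    _ = 4^j * ((l+1)*(l+2)) := by rw [← Nat.mul_pow]

lemma nat_sq_le (j : ℕ) : j^2 ≤ 4^j := by
  have h : j ≤ 2^j := (Nat.lt_two_pow_self (n := j)).le
  calc j^2 ≤ (2^j)^2 := Nat.pow_le_pow_left h 2
    _ = 4^j := by rw [← Nat.pow_mul, Nat.mul_comm, Nat.pow_mul]

lemma nat_quart_le (j : ℕ) : j^4 ≤ 16^j := by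
  have h : j ≤ 2^j := (Nat.lt_two_pow_self (n := j)).le
  calc j^4 ≤ (2^j)^4 := Nat.pow_le_pow_left h 4
    _ = 16^j := by rw [← Nat.pow_mul, Nat.mul_comm, Nat.pow_mul]

lemma term_le (n l : ℕ) (hl : l ≤ n) {u : ℝ} (hu : 0 < u) :
    shA n l * (1 / (2*u)^l)
      ≤ shA n n * (1 / (2*u)^n) * (u^(n-l) / (n-l).factorial) := by
  set j := n - l with hj
  have hlj : l + j = n := by omega
  have key : ((2:ℝ))^j * ((n+l).factorial * n.factorial)
      ≤ (l.factorial : ℝ) * (2*n).factorial := by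
    have := nat_ineq1 n j (by omega)
    rw [show 2*n - j = n + l from by omega, show n - j = l from by omega] at this
    exact_mod_cast this
  unfold shA
  rw [show n - n = 0 from by omega, Nat.factorial_zero, show n + n = 2*n from by omega]
  rw [← hj]
  have hpow : ((2:ℝ)*u)^n = (2*u)^l * (2^j * u^j) := by
    rw [← hlj, pow_add]; ring
  rw [hpow]
  rw [div_mul_div_comm, div_mul_div_comm, div_mul_div_comm,
    div_le_div_iff₀ (by positivity) (by positivity)]
  have hint := mul_le_mul_of_nonneg_right key
    (show (0:ℝ) ≤ u^j*((2*u)^l*(j.factorial:ℝ)) from by positivity)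
  push_cast
  nlinarith [hint]

lemma tail_sum (x : ℝ) (hx : 0 ≤ x) (n : ℕ) (hn : 2 ≤ n) :
    ∑ l ∈ Finset.range (n-1), x^(n-l) / ((n-l).factorial : ℝ) ≤ Real.exp x := by
  have h := Finset.sum_range_reflect (fun j => x^(j+2)/((j+2).factorial : ℝ)) (n-1)
  have e : ∀ l ∈ Finset.range (n-1),
      x^(n-l)/((n-l).factorial : ℝ) = x^((n-1-1-l)+2)/(((n-1-1-l)+2).factorial : ℝ) := by
    intro l hl
    rw [Finset.mem_range] at hl
    rw [show n-1-1-l+2 = n - l from by omega]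
  rw [Finset.sum_congr rfl e, h]
  have hle : ∑ j ∈ Finset.range (n-1), x^(j+2)/((j+2).factorial : ℝ)
      ≤ ∑ i ∈ Finset.range (n+1), x^i/(i.factorial : ℝ) := by
    rw [show n+1 = (n-1)+2 from by omega, Finset.sum_range_succ', Finset.sum_range_succ']
    have hrest : (0:ℝ) ≤ x^(0+1)/(((0+1).factorial):ℝ) + x^0/((Nat.factorial 0 : ℝ)) := by positivity
    have e2 : ∑ j ∈ Finset.range (n-1), x^(j+1+1)/((j+1+1).factorial : ℝ)
        = ∑ j ∈ Finset.range (n-1), x^(j+2)/((j+2).factorial : ℝ) :=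
      Finset.sum_congr rfl fun j _ => by norm_num
    rw [e2]
    linarith [hrest]
  exact hle.trans (Real.sum_le_exp_of_nonneg hx _)

lemma shP_ge (n : ℕ) {u : ℝ} (hu : 0 < u) :
    shA n n * (1 / (2*u)^n) ≤ shP n u := by
  rw [shP]
  have := Finset.sum_range_succ (fun l => shA n l * (1 / (2*u)^l)) n
  rw [this]
  have : (0:ℝ) ≤ ∑ l ∈ Finset.range n, shA n l * (1 / (2*u)^l) := by
    apply Finset.sum_nonneg
    intro l _
    have := shA_pos n l
    positivity
  linarith

lemma shP_pos (n : ℕ) {u : ℝ} (hu : 0 < u) : 0 < shP n u := by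
  have h1 := shP_ge n hu
  have h2 := shA_pos n n
  have : (0:ℝ) < shA n n * (1 / (2*u)^n) := by positivity
  linarith

lemma shAnn_ge (n : ℕ) {u : ℝ} (hu : 0 < u) :
    (n.factorial : ℝ) / (2*u)^n ≤ shA n n * (1 / (2*u)^n) := by
  have hd : (n.factorial : ℝ) ≤ shA n n := by
    unfold shA
    rw [show n - n = 0 from by omega, Nat.factorial_zero, show n + n = 2*n from by omega]
    have hdvd : n.factorial * n.factorial ≤ (2*n).factorial := by
      have := Nat.factorial_mul_factorial_dvd_factorial_add n n
      rw [show n + n = 2*n from by omega] at this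
      exact Nat.le_of_dvd (Nat.factorial_pos _) this
    rw [le_div_iff₀ (by positivity)]
    have hc : ((n.factorial * n.factorial : ℕ) : ℝ) ≤ (((2*n).factorial : ℕ) : ℝ) :=
      Nat.cast_le.mpr hdvd
    push_cast at hc ⊢
    nlinarith [hc]
  have hw : (0:ℝ) < (2*u)^n := by positivity
  calc (n.factorial : ℝ) / (2*u)^n ≤ shA n n / (2*u)^n := by gcongr
    _ = shA n n * (1 / (2*u)^n) := by ring

set_option maxHeartbeats 2000000 in
lemma Q_bound (n : ℕ) (hn : 2 ≤ n) {u : ℝ} (hu : 0 < u)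
    (hext : (2*u + u^2) * ((n:ℝ)+1) * (n:ℝ)^2 ≤ (n.factorial : ℝ) / (2*u)^n) :
    |shQ n u| ≤ (Real.exp (64*u) + Real.exp (16*u) + 1) / (n:ℝ)^2
        * (shA n n * (1 / (2*u)^n)) := by
  have hn2 : (2:ℝ) ≤ (n:ℝ) := by exact_mod_cast hn
  have hnpos : (0:ℝ) < (n:ℝ) := by linarith
  set W := shA n n * (1 / (2*u)^n) with hWdef
  have hW : 0 < W := by have := shA_pos n n; positivity
  -- head bound
  have hc : u^2*(((n:ℝ)*((n:ℝ)+1))*(1/(2*u)))/(2*(n:ℝ)) = u*((n:ℝ)+1)/4 := by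
    field_simp; ring
  have hhead : |(-u) + u^2/(2*(n:ℝ)) + u^2 * (shA n 1 * (1/(2*u))) / (2*(n:ℝ))|
      ≤ (2*u + u^2) * ((n:ℝ)+1) := by
    rw [shA_one n (by omega), hc]
    have hd1 : u^2/(2*(n:ℝ)) ≤ u^2 := by
      apply div_le_self (by positivity) (by linarith)
    have hd0 : 0 < u^2/(2*(n:ℝ)) := by positivity
    rw [abs_le]
    constructor <;> nlinarith [sq_nonneg u, mul_pos hu hnpos]
  -- sum bound
  have hsum : |∑ l ∈ Finset.range (n-1), (shA n l * (1 / (2*u)^l)) *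
        ((((n:ℝ)-l) * ((n:ℝ)-l-1) * ((((n:ℝ)-l-1)*((n:ℝ)-l-2)) - 2*(n:ℝ)))
          / (8*(n:ℝ)*((l:ℝ)+1)*((l:ℝ)+2)))|
      ≤ (Real.exp (64*u) + Real.exp (16*u)) / (n:ℝ)^2 * W := by
    have htermbound : ∀ l ∈ Finset.range (n-1),
        |(shA n l * (1 / (2*u)^l)) *
          ((((n:ℝ)-l) * ((n:ℝ)-l-1) * ((((n:ℝ)-l-1)*((n:ℝ)-l-2)) - 2*(n:ℝ)))
            / (8*(n:ℝ)*((l:ℝ)+1)*((l:ℝ)+2)))|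
        ≤ W * (((64*u)^(n-l) + 2*(n:ℝ)*(16*u)^(n-l)) / ((n-l).factorial : ℝ))
            * (1/(8*(n:ℝ)*((n:ℝ)+1)*((n:ℝ)+2))) := by
      intro l hl
      rw [Finset.mem_range] at hl
      set j := n - l with hjdef
      have hj2 : 2 ≤ j := by omega
      have hlj : l + j = n := by omega
      have hcast : ((n:ℝ) - l) = (j:ℝ) := by
        rw [hjdef, Nat.cast_sub (by omega)]
      have hj2r : (2:ℝ) ≤ (j:ℝ) := by exact_mod_cast hj2
      have hA : 0 < shA n l := shA_pos n l
      have hwl : (0:ℝ) < 1/(2*u)^l := by positivity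
      -- numerator bound
      have hXbound : |(((n:ℝ)-l) * ((n:ℝ)-l-1) * ((((n:ℝ)-l-1)*((n:ℝ)-l-2)) - 2*(n:ℝ)))|
          ≤ (16:ℝ)^j + 2*(n:ℝ)*(4:ℝ)^j := by
        rw [hcast]
        have h1 : (0:ℝ) ≤ (j:ℝ) - 1 := by linarith
        have h2 : (0:ℝ) ≤ (j:ℝ) - 2 := by linarith
        have hB : |(((j:ℝ)-1)*((j:ℝ)-2)) - 2*(n:ℝ)| ≤ (j:ℝ)^2 + 2*(n:ℝ) := by
          rw [abs_le]
          constructor <;> nlinarith [mul_nonneg h1 h2]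
        have hA2 : |(j:ℝ) * ((j:ℝ)-1)| ≤ (j:ℝ)^2 := by
          rw [abs_of_nonneg (by nlinarith)]
          nlinarith
        have hsq : ((j:ℝ))^2 ≤ (4:ℝ)^j := by
          have := nat_sq_le j
          have hc2 : ((j^2 : ℕ) : ℝ) ≤ ((4^j : ℕ) : ℝ) := Nat.cast_le.mpr this
          push_cast at hc2
          exact hc2
        have hqu : ((j:ℝ))^4 ≤ (16:ℝ)^j := by
          have := nat_quart_le j
          have hc2 : ((j^4 : ℕ) : ℝ) ≤ ((16^j : ℕ) : ℝ) := Nat.cast_le.mpr this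
          push_cast at hc2
          exact hc2
        calc |(j:ℝ) * ((j:ℝ)-1) * ((((j:ℝ)-1)*((j:ℝ)-2)) - 2*(n:ℝ))|
            = |(j:ℝ) * ((j:ℝ)-1)| * |(((j:ℝ)-1)*((j:ℝ)-2)) - 2*(n:ℝ)| := abs_mul _ _
          _ ≤ (j:ℝ)^2 * ((j:ℝ)^2 + 2*(n:ℝ)) := by
              apply mul_le_mul hA2 hB (abs_nonneg _) (by positivity)
          _ = (j:ℝ)^4 + 2*(n:ℝ)*(j:ℝ)^2 := by ring
          _ ≤ (16:ℝ)^j + 2*(n:ℝ)*(4:ℝ)^j := by nlinarith [hsq, hqu]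
      -- denominator bound
      have hYbound : 1/(8*(n:ℝ)*((l:ℝ)+1)*((l:ℝ)+2))
          ≤ (4:ℝ)^j / (8*(n:ℝ)*((n:ℝ)+1)*((n:ℝ)+2)) := by
        have hnat := nat_ineq2 l j
        have hcast2 : ((n:ℝ)+1)*((n:ℝ)+2) ≤ (4:ℝ)^j * (((l:ℝ)+1)*((l:ℝ)+2)) := by
          have : ((l + j + 1) * (l + j + 2) : ℕ) ≤ (4^j * ((l+1)*(l+2)) : ℕ) := hnat
          have hc2 : (((l + j + 1) * (l + j + 2) : ℕ) : ℝ) ≤ ((4^j * ((l+1)*(l+2)) : ℕ) : ℝ) := Nat.cast_le.mpr this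
          push_cast at hc2
          rw [show ((l:ℝ) + (j:ℝ)) = (n:ℝ) from by exact_mod_cast congrArg (Nat.cast (R := ℝ)) hlj] at hc2
          linarith
        rw [div_le_div_iff₀ (by positivity) (by positivity)]
        nlinarith [hcast2, hnpos]
      have hterm := term_le n l (by omega) hu
      have e64 : ((64:ℝ)*u)^j = (16:ℝ)^j*(4:ℝ)^j*u^j := by
        rw [show (64:ℝ)*u = 16*(4*u) from by ring, mul_pow, mul_pow]; ring
      have e16 : ((16:ℝ)*u)^j = (4:ℝ)^j*(4:ℝ)^j*u^j := by
        rw [show (16:ℝ)*u = 4*(4*u) from by ring, mul_pow, mul_pow]; ring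
      calc |(shA n l * (1 / (2*u)^l)) *
          ((((n:ℝ)-l) * ((n:ℝ)-l-1) * ((((n:ℝ)-l-1)*((n:ℝ)-l-2)) - 2*(n:ℝ)))
            / (8*(n:ℝ)*((l:ℝ)+1)*((l:ℝ)+2)))|
          = (shA n l * (1 / (2*u)^l)) *
            (|(((n:ℝ)-l) * ((n:ℝ)-l-1) * ((((n:ℝ)-l-1)*((n:ℝ)-l-2)) - 2*(n:ℝ)))|
              * (1/(8*(n:ℝ)*((l:ℝ)+1)*((l:ℝ)+2)))) := by
            rw [abs_mul, abs_div, abs_of_nonneg (by positivity : (0:ℝ) ≤ shA n l * (1 / (2*u)^l)),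
              abs_of_nonneg (by positivity : (0:ℝ) ≤ 8*(n:ℝ)*((l:ℝ)+1)*((l:ℝ)+2))]
            ring
        _ ≤ (W * (u^j / (j.factorial : ℝ))) *
            (((16:ℝ)^j + 2*(n:ℝ)*(4:ℝ)^j) * ((4:ℝ)^j / (8*(n:ℝ)*((n:ℝ)+1)*((n:ℝ)+2)))) := by
            have hWnn : (0:ℝ) ≤ shA n n * (1 / (2*u)^n) := by
              have := shA_pos n n; positivity
            exact mul_le_mul hterm
              (mul_le_mul hXbound hYbound (by positivity) (by positivity))
              (by positivity) (by positivity)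
        _ = W * (((64*u)^j + 2*(n:ℝ)*(16*u)^j) / (j.factorial : ℝ))
            * (1/(8*(n:ℝ)*((n:ℝ)+1)*((n:ℝ)+2))) := by
            rw [e64, e16]
            ring
    calc |∑ l ∈ Finset.range (n-1), (shA n l * (1 / (2*u)^l)) *
          ((((n:ℝ)-l) * ((n:ℝ)-l-1) * ((((n:ℝ)-l-1)*((n:ℝ)-l-2)) - 2*(n:ℝ)))
            / (8*(n:ℝ)*((l:ℝ)+1)*((l:ℝ)+2)))|
        ≤ ∑ l ∈ Finset.range (n-1), |(shA n l * (1 / (2*u)^l)) *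
          ((((n:ℝ)-l) * ((n:ℝ)-l-1) * ((((n:ℝ)-l-1)*((n:ℝ)-l-2)) - 2*(n:ℝ)))
            / (8*(n:ℝ)*((l:ℝ)+1)*((l:ℝ)+2)))| := Finset.abs_sum_le_sum_abs _ _
      _ ≤ ∑ l ∈ Finset.range (n-1),
            W * (((64*u)^(n-l) + 2*(n:ℝ)*(16*u)^(n-l)) / ((n-l).factorial : ℝ))
              * (1/(8*(n:ℝ)*((n:ℝ)+1)*((n:ℝ)+2))) := Finset.sum_le_sum htermbound
      _ = W * (1/(8*(n:ℝ)*((n:ℝ)+1)*((n:ℝ)+2))) *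
            ((∑ l ∈ Finset.range (n-1), (64*u)^(n-l) / ((n-l).factorial : ℝ))
             + 2*(n:ℝ) * ∑ l ∈ Finset.range (n-1), (16*u)^(n-l) / ((n-l).factorial : ℝ)) := by
          simp only [Finset.mul_sum, ← Finset.sum_add_distrib]
          exact Finset.sum_congr rfl fun l _ => by ring
      _ ≤ W * (1/(8*(n:ℝ)*((n:ℝ)+1)*((n:ℝ)+2))) *
            (Real.exp (64*u) + 2*(n:ℝ) * Real.exp (16*u)) := by
          apply mul_le_mul_of_nonneg_left _ (by positivity)
          have t1 := tail_sum (64*u) (by positivity) n hn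
          have t2 := tail_sum (16*u) (by positivity) n hn
          nlinarith [t2, hnpos]
      _ ≤ (Real.exp (64*u) + Real.exp (16*u)) / (n:ℝ)^2 * W := by
          have he1 := (Real.exp_pos (64*u)).le
          have he2 := (Real.exp_pos (16*u)).le
          have key2 : (Real.exp (64*u) + 2*(n:ℝ)*Real.exp (16*u))
                * (1/(8*(n:ℝ)*((n:ℝ)+1)*((n:ℝ)+2)))
              ≤ (Real.exp (64*u) + Real.exp (16*u))/(n:ℝ)^2 := by
            rw [mul_one_div, div_le_div_iff₀ (by positivity) (by positivity)]
            have g1 : (0:ℝ) ≤ 8*(n:ℝ)*((n:ℝ)+1)*((n:ℝ)+2) - (n:ℝ)^2 := by nlinarith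
            have g2 : (0:ℝ) ≤ 8*(n:ℝ)*((n:ℝ)+1)*((n:ℝ)+2) - 2*(n:ℝ)^3 := by nlinarith
            nlinarith [mul_nonneg he1 g1, mul_nonneg he2 g2]
          calc W * (1/(8*(n:ℝ)*((n:ℝ)+1)*((n:ℝ)+2))) *
                (Real.exp (64*u) + 2*(n:ℝ) * Real.exp (16*u))
              = ((Real.exp (64*u) + 2*(n:ℝ)*Real.exp (16*u))
                  * (1/(8*(n:ℝ)*((n:ℝ)+1)*((n:ℝ)+2)))) * W := by ring
            _ ≤ (Real.exp (64*u) + Real.exp (16*u))/(n:ℝ)^2 * W :=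
                mul_le_mul_of_nonneg_right key2 hW.le
  -- assemble
  have hQsplit : shQ n u = ((-u) + u^2/(2*(n:ℝ)) + u^2 * (shA n 1 * (1/(2*u))) / (2*(n:ℝ)))
      + ∑ l ∈ Finset.range (n-1), (shA n l * (1 / (2*u)^l)) *
        ((((n:ℝ)-l) * ((n:ℝ)-l-1) * ((((n:ℝ)-l-1)*((n:ℝ)-l-2)) - 2*(n:ℝ)))
          / (8*(n:ℝ)*((l:ℝ)+1)*((l:ℝ)+2))) := by
    rw [shQ]
  have hWlow : (n.factorial : ℝ) / (2*u)^n ≤ W := shAnn_ge n hu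
  have hhead2 : (2*u + u^2) * ((n:ℝ)+1) ≤ W / (n:ℝ)^2 := by
    rw [le_div_iff₀ (by positivity)]
    calc (2*u + u^2) * ((n:ℝ)+1) * (n:ℝ)^2 ≤ (n.factorial : ℝ) / (2*u)^n := hext
      _ ≤ W := hWlow
  calc |shQ n u| ≤ |(-u) + u^2/(2*(n:ℝ)) + u^2 * (shA n 1 * (1/(2*u))) / (2*(n:ℝ))|
        + |∑ l ∈ Finset.range (n-1), (shA n l * (1 / (2*u)^l)) *
          ((((n:ℝ)-l) * ((n:ℝ)-l-1) * ((((n:ℝ)-l-1)*((n:ℝ)-l-2)) - 2*(n:ℝ)))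
            / (8*(n:ℝ)*((l:ℝ)+1)*((l:ℝ)+2)))| := by
        rw [hQsplit]; exact abs_add_le _ _
    _ ≤ W / (n:ℝ)^2 + (Real.exp (64*u) + Real.exp (16*u)) / (n:ℝ)^2 * W :=
        add_le_add (hhead.trans hhead2) hsum
    _ = (Real.exp (64*u) + Real.exp (16*u) + 1) / (n:ℝ)^2 * W := by ring

lemma sphericalHankel_eq (n : ℕ) (u : ℝ) :
    sphericalHankel n u = (Real.pi * Real.exp (-u) / (2 * u)) * shP n u := rfl

lemma hasDerivAt_sh (n : ℕ) {u : ℝ} (hu : 0 < u) :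
    HasDerivAt (fun v => sphericalHankel n v)
      ((Real.pi * Real.exp (-u) / (2 * u)) * (-(1 + 1/u) * shP n u - shT n u / u)) u := by
  have hu' : u ≠ 0 := hu.ne'
  have h2 : HasDerivAt (fun v : ℝ => 2 * v) 2 u := by
    simpa using (hasDerivAt_id u).const_mul (2:ℝ)
  have h2u : (2 : ℝ) * u ≠ 0 := by positivity
  have h1 : HasDerivAt (fun v : ℝ => Real.pi * Real.exp (-v))
      (Real.pi * (-Real.exp (-u))) u := by
    have : HasDerivAt (fun v : ℝ => Real.exp (-v)) (-Real.exp (-u)) u := by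
      simpa [Function.comp_def] using (Real.hasDerivAt_exp (-u)).comp u ((hasDerivAt_id u).neg)
    exact this.const_mul Real.pi
  have hf : HasDerivAt (fun v : ℝ => Real.pi * Real.exp (-v) / (2 * v))
      ((Real.pi * (-Real.exp (-u)) * (2*u) - Real.pi * Real.exp (-u) * 2) / (2*u)^2) u :=
    h1.div h2 h2u
  have hg : HasDerivAt (fun v : ℝ => ∑ l ∈ Finset.range (n+1), shA n l * (1 / (2 * v) ^ l))
      (∑ l ∈ Finset.range (n+1),
        shA n l * (-((l:ℝ) * (2*u)^(l-1) * 2) / ((2*u)^l)^2)) u := by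
    apply HasDerivAt.fun_sum
    intro l _
    have hp : HasDerivAt (fun v : ℝ => (2 * v) ^ l) ((l:ℝ) * (2*u)^(l-1) * 2) u := by
      simpa [Function.comp_def] using ((hasDerivAt_pow l ((2:ℝ)*u)).comp u h2)
    have hpe : (2*u)^l ≠ 0 := pow_ne_zero _ h2u
    have : HasDerivAt (fun v : ℝ => ((2 * v) ^ l)⁻¹)
        (-((l:ℝ) * (2*u)^(l-1) * 2) / ((2*u)^l)^2) u := hp.inv hpe
    simpa [one_div] using this.const_mul (shA n l)
  have := hf.mul hg
  have heq : (Real.pi * (-Real.exp (-u)) * (2*u) - Real.pi * Real.exp (-u) * 2) / (2*u)^2 *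
        (∑ l ∈ Finset.range (n+1), shA n l * (1 / (2 * u) ^ l)) +
      (Real.pi * Real.exp (-u) / (2 * u)) *
        (∑ l ∈ Finset.range (n+1),
          shA n l * (-((l:ℝ) * (2*u)^(l-1) * 2) / ((2*u)^l)^2))
      = (Real.pi * Real.exp (-u) / (2 * u)) * (-(1 + 1/u) * shP n u - shT n u / u) := by
    have hterm : ∀ l ∈ Finset.range (n+1),
        shA n l * (-((l:ℝ) * (2*u)^(l-1) * 2) / ((2*u)^l)^2)
          = -(1/u) * ((l:ℝ) * (shA n l * (1 / (2 * u) ^ l))) := by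
      intro l _
      rcases l with _ | m
      · simp
      · have hm : m + 1 - 1 = m := rfl
        rw [hm]
        have h2m : (2*u)^m ≠ 0 := pow_ne_zero _ h2u
        push_cast
        field_simp
        ring
    rw [Finset.sum_congr rfl hterm, ← Finset.mul_sum, shT, shP]
    field_simp
    ring
  rw [heq] at this
  exact this

lemma E_eq (n : ℕ) (hn : 2 ≤ n) {u : ℝ} (hu : 0 < u) :
    u * deriv (fun v => sphericalHankel n v) u / sphericalHankel n u + (n:ℝ) + 1
      + u^2/(2*(n:ℝ)) = shQ n u / shP n u := by
  have hD := (hasDerivAt_sh n hu).deriv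
  have hP := shP_pos n hu
  have hu' : u ≠ 0 := hu.ne'
  have hπ : Real.pi ≠ 0 := Real.pi_ne_zero
  have hex : Real.exp (-u) ≠ 0 := Real.exp_ne_zero _
  have hnpos : (0:ℝ) < (n:ℝ) := by
    have : 0 < n := by omega
    exact_mod_cast this
  rw [hD, sphericalHankel_eq, ← key_identity n hn hu]
  field_simp
  ring

/-- Large-`n` asymptotics of the logarithmic derivative:
`u k_n'(u)/k_n(u) = −n − 1 − u²/(2n) + O(1/n²)`; in particular
`u k_n'(u)/k_n(u) + n + 1 → 0` as `n → ∞`. -/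
theorem logDeriv_sphericalHankel_asymptotics (u : ℝ) (hu : 0 < u) :
    (∃ C : ℝ, ∀ᶠ n : ℕ in atTop,
        |u * deriv (fun v => sphericalHankel n v) u / sphericalHankel n u
          + (n : ℝ) + 1 + u ^ 2 / (2 * (n : ℝ))| ≤ C / (n : ℝ) ^ 2) ∧
    Tendsto (fun n : ℕ =>
        u * deriv (fun v => sphericalHankel n v) u / sphericalHankel n u + (n : ℝ) + 1)
      atTop (nhds 0) := by
  set C₀ : ℝ := Real.exp (64*u) + Real.exp (16*u) + 1 with hC₀
  set c : ℝ := 2*u + u^2 with hcdef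
  have hcpos : 0 < c := by rw [hcdef]; positivity
  have hεpos : (0:ℝ) < 1/(8*c+1) := by positivity
  have hfac : ∀ᶠ n : ℕ in atTop, (4*u)^n / (n.factorial:ℝ) < 1 :=
    (FloorSemiring.tendsto_pow_div_factorial_atTop (4*u)).eventually_lt_const one_pos
  have hpoly : ∀ᶠ n : ℕ in atTop, (n:ℝ)^3 / 2^n < 1/(8*c+1) :=
    (tendsto_pow_const_div_const_pow_of_one_lt 3 (by norm_num : (1:ℝ) < 2)).eventually_lt_const
      hεpos
  have hkey : ∀ᶠ n : ℕ in atTop,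
      |u * deriv (fun v => sphericalHankel n v) u / sphericalHankel n u
        + (n : ℝ) + 1 + u ^ 2 / (2 * (n : ℝ))| ≤ C₀ / (n : ℝ) ^ 2 := by
    filter_upwards [eventually_ge_atTop 2, hfac, hpoly] with n hn2 hfa hpo
    have hn2r : (2:ℝ) ≤ (n:ℝ) := by exact_mod_cast hn2
    have hnpos : (0:ℝ) < (n:ℝ) := by linarith
    have hfacpos : (0:ℝ) < (n.factorial : ℝ) := by
      exact_mod_cast n.factorial_pos
    -- n! ≥ (4u)^n
    have h1 : (4*u)^n ≤ (n.factorial : ℝ) := by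
      have := (div_lt_one hfacpos).mp hfa
      linarith
    -- n!/(2u)^n ≥ 2^n
    have h2 : (2:ℝ)^n ≤ (n.factorial : ℝ) / (2*u)^n := by
      rw [le_div_iff₀ (by positivity)]
      calc (2:ℝ)^n * (2*u)^n = (4*u)^n := by
            rw [← mul_pow, show (2:ℝ)*(2*u) = 4*u from by ring]
        _ ≤ (n.factorial : ℝ) := h1
    -- (8c+1) n³ ≤ 2^n
    have h3 : (8*c+1) * (n:ℝ)^3 ≤ (2:ℝ)^n := by
      have h2n : (0:ℝ) < (2:ℝ)^n := by positivity
      have hlt := (div_lt_iff₀ h2n).mp hpo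
      rw [div_eq_mul_inv] at hlt
      have hne : (8*c+1 : ℝ) ≠ 0 := by positivity
      have hinv : ((8*c+1):ℝ)⁻¹ * (8*c+1) = 1 := inv_mul_cancel₀ hne
      have hmul := mul_lt_mul_of_pos_right hlt (show (0:ℝ) < 8*c+1 from by positivity)
      have : (8*c+1) * (n:ℝ)^3 < (2:ℝ)^n := by
        calc (8*c+1) * (n:ℝ)^3 = (n:ℝ)^3 * (8*c+1) := by ring
          _ < 1 * (8*c+1)⁻¹ * 2^n * (8*c+1) := hmul
          _ = 2^n * ((8*c+1)⁻¹ * (8*c+1)) := by ring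
          _ = 2^n := by rw [hinv, mul_one]
      linarith
    have hext : (2*u + u^2) * ((n:ℝ)+1) * (n:ℝ)^2 ≤ (n.factorial : ℝ) / (2*u)^n := by
      calc (2*u + u^2) * ((n:ℝ)+1) * (n:ℝ)^2 ≤ (8*c+1) * (n:ℝ)^3 := by
            rw [← hcdef]
            have ha : (n:ℝ)+1 ≤ 2*(n:ℝ) := by linarith
            have hb : c * ((n:ℝ)+1) ≤ c * (2*(n:ℝ)) := mul_le_mul_of_nonneg_left ha hcpos.le
            have hb2 : c * ((n:ℝ)+1) * (n:ℝ)^2 ≤ c * (2*(n:ℝ)) * (n:ℝ)^2 :=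
              mul_le_mul_of_nonneg_right hb (by positivity)
            have hc3 : c * (2*(n:ℝ)) * (n:ℝ)^2 ≤ (8*c+1) * (n:ℝ)^3 := by
              nlinarith [mul_nonneg (show (0:ℝ) ≤ 6*c+1 from by positivity)
                (show (0:ℝ) ≤ (n:ℝ)^3 from by positivity)]
            linarith
        _ ≤ (2:ℝ)^n := h3
        _ ≤ (n.factorial : ℝ) / (2*u)^n := h2
    have hQb := Q_bound n hn2 hu hext
    rw [E_eq n hn2 hu, abs_div, abs_of_pos (shP_pos n hu)]
    have hWpos : (0:ℝ) < shA n n * (1 / (2*u)^n) := by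
      have := shA_pos n n; positivity
    calc |shQ n u| / shP n u ≤ |shQ n u| / (shA n n * (1 / (2*u)^n)) :=
          div_le_div_of_nonneg_left (abs_nonneg _) hWpos (shP_ge n hu)
      _ ≤ C₀ / (n:ℝ)^2 := by
          rw [div_le_iff₀ hWpos]
          exact hQb
  refine ⟨⟨C₀, hkey⟩, ?_⟩
  have hg : Tendsto (fun n : ℕ => C₀ * ((1:ℝ)/n)^2 + (u^2/2) * ((1:ℝ)/n)) atTop
      (nhds (C₀ * 0^2 + (u^2/2) * 0)) :=
    ((tendsto_one_div_atTop_nhds_zero_nat.pow 2).const_mul C₀).add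
      (tendsto_one_div_atTop_nhds_zero_nat.const_mul (u^2/2))
  have hg0 : Tendsto (fun n : ℕ => C₀ * ((1:ℝ)/n)^2 + (u^2/2) * ((1:ℝ)/n)) atTop (nhds 0) := by
    simpa using hg
  apply squeeze_zero_norm' _ hg0
  filter_upwards [hkey, eventually_ge_atTop 1] with n hb hn1
  have hn1r : (1:ℝ) ≤ (n:ℝ) := by exact_mod_cast hn1
  have hnpos : (0:ℝ) < (n:ℝ) := by linarith
  have e1 : C₀ * ((1:ℝ)/n)^2 = C₀ / (n:ℝ)^2 := by
    field_simp
  have e2 : (u^2/2) * ((1:ℝ)/n) = u^2 / (2*(n:ℝ)) := by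
    field_simp
  rw [Real.norm_eq_abs, e1, e2]
  have habs : |u * deriv (fun v => sphericalHankel n v) u / sphericalHankel n u + (n:ℝ) + 1|
      ≤ |u * deriv (fun v => sphericalHankel n v) u / sphericalHankel n u
          + (n : ℝ) + 1 + u ^ 2 / (2 * (n : ℝ))| + u^2/(2*(n:ℝ)) := by
    have h0 : (0:ℝ) ≤ u^2/(2*(n:ℝ)) := by positivity
    have := abs_sub_abs_le_abs_sub
      (u * deriv (fun v => sphericalHankel n v) u / sphericalHankel n u
        + (n : ℝ) + 1 + u ^ 2 / (2 * (n : ℝ)))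
      (u ^ 2 / (2 * (n : ℝ)))
    have he : u * deriv (fun v => sphericalHankel n v) u / sphericalHankel n u
        + (n : ℝ) + 1 + u ^ 2 / (2 * (n : ℝ)) - u ^ 2 / (2 * (n : ℝ))
        = u * deriv (fun v => sphericalHankel n v) u / sphericalHankel n u + (n:ℝ) + 1 := by
      ring
    rw [he] at this
    have h2 : |u ^ 2 / (2 * (n:ℝ))| = u^2/(2*(n:ℝ)) := abs_of_nonneg h0
    calc |u * deriv (fun v => sphericalHankel n v) u / sphericalHankel n u + (n:ℝ) + 1|
        ≤ |u * deriv (fun v => sphericalHankel n v) u / sphericalHankel n u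
            + (n : ℝ) + 1 + u ^ 2 / (2 * (n : ℝ))| + |u ^ 2 / (2 * (n:ℝ))| := by
          have := abs_sub (u * deriv (fun v => sphericalHankel n v) u / sphericalHankel n u
            + (n : ℝ) + 1 + u ^ 2 / (2 * (n : ℝ))) (u ^ 2 / (2 * (n : ℝ)))
          rw [he] at this
          exact this
      _ = _ := by rw [h2]
  calc |u * deriv (fun v => sphericalHankel n v) u / sphericalHankel n u + (n:ℝ) + 1|
      ≤ C₀ / (n:ℝ)^2 + u^2/(2*(n:ℝ)) := by
        have := habs.trans (add_le_add_left hb _)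
        exact this
    _ = _ := rfl
end

section
/- For dielectric ratio ε = 1 and fixed u > 0, the harmonic coefficients M_n(u) := ((n+1)k_n(u) + u k_n'(u)) / (n k_n(u) − u k_n'(u)) satisfy n²·M_n(u) → −u²/4 as n → ∞; in particular M_n(u) = O(1/n²) and Σ_{n=0}^∞ M_n(u) converges absolutely. -/
open Filter

open Finset

noncomputable def cc (n l : ℕ) : ℝ :=
  (Nat.factorial (n + l) : ℝ) / (Nat.factorial l * Nat.factorial (n - l))

lemma fact_ne (k : ℕ) : (Nat.factorial k : ℝ) ≠ 0 := by
  exact_mod_cast (Nat.factorial_pos k).ne'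

lemma cc_pos (n l : ℕ) : 0 < cc n l := by
  unfold cc
  apply div_pos
  · exact_mod_cast Nat.factorial_pos _
  · exact mul_pos (by exact_mod_cast Nat.factorial_pos _) (by exact_mod_cast Nat.factorial_pos _)

lemma cc_zero (n : ℕ) : cc n 0 = 1 := by
  unfold cc
  simp [Nat.factorial]
  exact Nat.factorial_ne_zero n

lemma cc_succ_succ {n l : ℕ} (h : l + 1 ≤ n) :
    cc (n + 1) (l + 1) = cc n (l + 1) + 2 * cc n l * ((n : ℝ) + l + 1) := by
  obtain ⟨k, rfl⟩ : ∃ k, n = l + 1 + k := ⟨n - (l + 1), by omega⟩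
  unfold cc
  have h1 : l + 1 + k + 1 + (l + 1) = 2 * l + k + 1 + 1 + 1 := by ring
  have h2 : l + 1 + k + (l + 1) = 2 * l + k + 1 + 1 := by ring
  have h3 : l + 1 + k + l = 2 * l + k + 1 := by ring
  have h4 : l + 1 + k + 1 - (l + 1) = k + 1 := by omega
  have h5 : l + 1 + k - (l + 1) = k := by omega
  have h6 : l + 1 + k - l = k + 1 := by omega
  rw [h1, h2, h3, h4, h5, h6]
  simp only [Nat.factorial_succ]
  push_cast
  field_simp
  ring

lemma cc_succ_succ' {m l : ℕ} (h : l + 1 ≤ m) :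
    cc (m + 1) (l + 1) = cc m (l + 1) + 2 * cc (m + 1) l * ((m : ℝ) - l + 1) := by
  obtain ⟨k, rfl⟩ : ∃ k, m = l + 1 + k := ⟨m - (l + 1), by omega⟩
  unfold cc
  have h1 : l + 1 + k + 1 + (l + 1) = 2 * l + k + 1 + 1 + 1 := by ring
  have h2 : l + 1 + k + (l + 1) = 2 * l + k + 1 + 1 := by ring
  have h3 : l + 1 + k + 1 + l = 2 * l + k + 1 + 1 := by ring
  have h4 : l + 1 + k + 1 - (l + 1) = k + 1 := by omega
  have h5 : l + 1 + k - (l + 1) = k := by omega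
  have h6 : l + 1 + k + 1 - l = k + 1 + 1 := by omega
  rw [h1, h2, h3, h4, h5, h6]
  simp only [Nat.factorial_succ]
  push_cast
  field_simp
  ring

lemma cc_top2 (n : ℕ) : cc (n + 1) (n + 1) = 2 * cc n n * (2 * (n : ℝ) + 1) := by
  unfold cc
  have h1 : n + 1 + (n + 1) = 2 * n + 1 + 1 := by ring
  have h2 : n + n = 2 * n := by ring
  have h4 : n + 1 - (n + 1) = 0 := by omega
  have h5 : n - n = 0 := by omega
  rw [h1, h2, h4, h5]
  simp only [Nat.factorial_succ]
  push_cast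
  simp [Nat.factorial]
  field_simp
  ring

lemma cc_top1 (m : ℕ) : cc (m + 1) (m + 1) = 2 * cc (m + 1) m := by
  unfold cc
  have h1 : m + 1 + (m + 1) = 2 * m + 1 + 1 := by ring
  have h2 : m + 1 + m = 2 * m + 1 := by ring
  have h4 : m + 1 - (m + 1) = 0 := by omega
  have h5 : m + 1 - m = 1 := by omega
  rw [h1, h2, h4, h5]
  simp only [Nat.factorial_succ]
  push_cast
  simp [Nat.factorial]
  field_simp
  ring

lemma gpoly_succ (n : ℕ) (x : ℝ) :
    ∑ l ∈ range (n + 2), cc (n + 1) l * x ^ l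
      = ∑ l ∈ range (n + 1), cc n l * x ^ l
        + ∑ l ∈ range (n + 1), 2 * cc n l * ((n : ℝ) + l + 1) * x ^ (l + 1) := by
  rw [Finset.sum_range_succ' (fun l => cc (n + 1) l * x ^ l) (n + 1),
    Finset.sum_range_succ' (fun l => cc n l * x ^ l) n,
    Finset.sum_range_succ (fun l => 2 * cc n l * ((n : ℝ) + l + 1) * x ^ (l + 1)) n,
    Finset.sum_range_succ (fun l => cc (n + 1) (l + 1) * x ^ (l + 1)) n]
  have hin : ∀ l ∈ range n, cc (n + 1) (l + 1) * x ^ (l + 1)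
      = cc n (l + 1) * x ^ (l + 1) + 2 * cc n l * ((n : ℝ) + l + 1) * x ^ (l + 1) := by
    intro l hl
    rw [cc_succ_succ (by simpa using (Finset.mem_range.mp hl))]
    ring
  rw [Finset.sum_congr rfl hin, Finset.sum_add_distrib, cc_zero, cc_zero, cc_top2]
  push_cast
  ring

lemma gpoly_pred (m : ℕ) (x : ℝ) :
    ∑ l ∈ range (m + 2), cc (m + 1) l * x ^ l
      = ∑ l ∈ range (m + 1), cc m l * x ^ l
        + ∑ l ∈ range (m + 2), 2 * cc (m + 1) l * (((m : ℝ) + 1) - l) * x ^ (l + 1) := by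
  rw [Finset.sum_range_succ' (fun l => cc (m + 1) l * x ^ l) (m + 1),
    Finset.sum_range_succ' (fun l => cc m l * x ^ l) m,
    Finset.sum_range_succ (fun l => 2 * cc (m + 1) l * (((m : ℝ) + 1) - l) * x ^ (l + 1)) (m + 1),
    Finset.sum_range_succ (fun l => 2 * cc (m + 1) l * (((m : ℝ) + 1) - l) * x ^ (l + 1)) m,
    Finset.sum_range_succ (fun l => cc (m + 1) (l + 1) * x ^ (l + 1)) m]
  have hin : ∀ l ∈ range m, cc (m + 1) (l + 1) * x ^ (l + 1)
      = cc m (l + 1) * x ^ (l + 1) + 2 * cc (m + 1) l * (((m : ℝ) + 1) - l) * x ^ (l + 1) := by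
    intro l hl
    rw [cc_succ_succ' (by simpa using (Finset.mem_range.mp hl))]
    ring
  rw [Finset.sum_congr rfl hin, Finset.sum_add_distrib, cc_zero, cc_zero, cc_top1]
  push_cast
  ring

noncomputable def ggf (u : ℝ) (n : ℕ) : ℝ := ∑ l ∈ range (n + 1), cc n l * (1 / (2 * u)) ^ l

noncomputable def hhf (u : ℝ) (n : ℕ) : ℝ :=
  ∑ l ∈ range (n + 1), cc n l * ((l : ℝ) + 1) * (1 / (2 * u)) ^ l

lemma ggf_pos {u : ℝ} (hu : 0 < u) (n : ℕ) : 0 < ggf u n := by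
  apply Finset.sum_pos
  · intro l _
    have := cc_pos n l
    positivity
  · exact ⟨0, Finset.mem_range.mpr (Nat.succ_pos n)⟩

lemma idII {u : ℝ} (hu : 0 < u) (n : ℕ) :
    ((n : ℝ) + u) * ggf u n + hhf u n = u * ggf u (n + 1) := by
  have hu' : (2 : ℝ) * u ≠ 0 := by positivity
  unfold ggf hhf
  rw [show n + 1 + 1 = n + 2 from rfl]
  have key : ∑ l ∈ range (n + 1),
      (((n : ℝ) + u) * (cc n l * (1 / (2 * u)) ^ l)
        + cc n l * ((l : ℝ) + 1) * (1 / (2 * u)) ^ l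
        - u * (2 * cc n l * ((n : ℝ) + ↑l + 1) * (1 / (2 * u)) ^ (l + 1))
        - u * (cc n l * (1 / (2 * u)) ^ l)) = 0 := by
    refine Finset.sum_eq_zero fun l _ => ?_
    rw [pow_succ]
    field_simp
    ring
  rw [Finset.sum_sub_distrib, Finset.sum_sub_distrib, Finset.sum_add_distrib,
    ← Finset.mul_sum, ← Finset.mul_sum, ← Finset.mul_sum] at key
  have hS := gpoly_succ n (1 / (2 * u))
  linear_combination key - u * hS

lemma idI {u : ℝ} (hu : 0 < u) (m : ℕ) :
    (((m : ℝ) + 1) + 1 - u) * ggf u (m + 1) - hhf u (m + 1) = -u * ggf u m := by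
  have hu' : (2 : ℝ) * u ≠ 0 := by positivity
  unfold ggf hhf
  rw [show m + 1 + 1 = m + 2 from rfl]
  have key : ∑ l ∈ range (m + 2),
      (((((m : ℝ) + 1) + 1 - u) + u) * (cc (m + 1) l * (1 / (2 * u)) ^ l)
        - cc (m + 1) l * ((l : ℝ) + 1) * (1 / (2 * u)) ^ l
        - u * (2 * cc (m + 1) l * (((m : ℝ) + 1) - ↑l) * (1 / (2 * u)) ^ (l + 1))) = 0 := by
    refine Finset.sum_eq_zero fun l _ => ?_
    rw [pow_succ]
    field_simp
    ring
  rw [Finset.sum_sub_distrib, Finset.sum_sub_distrib,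
    ← Finset.mul_sum, ← Finset.mul_sum] at key
  have hS := gpoly_pred m (1 / (2 * u))
  linear_combination key - u * hS

lemma sh_eq_sum (n : ℕ) {v : ℝ} (hv : 0 < v) :
    sphericalHankel n v
      = ∑ l ∈ range (n + 1),
          (Real.pi * cc n l / 2 ^ (l + 1)) * (Real.exp (-v) / v ^ (l + 1)) := by
  unfold sphericalHankel cc
  rw [Finset.mul_sum]
  refine Finset.sum_congr rfl fun l _ => ?_
  have hv' : v ≠ 0 := hv.ne'
  have h2v : (2 : ℝ) * v ≠ 0 := by positivity
  field_simp
  ring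

lemma sh_hasDerivAt (n : ℕ) {u : ℝ} (hu : 0 < u) :
    HasDerivAt (fun v => sphericalHankel n v)
      (∑ l ∈ range (n + 1),
        (Real.pi * cc n l / 2 ^ (l + 1)) * (-(Real.exp (-u)) * (u + (l : ℝ) + 1) / u ^ (l + 2))) u := by
  have hu' : u ≠ 0 := hu.ne'
  have hF : HasDerivAt
      (fun v => ∑ l ∈ range (n + 1),
        (Real.pi * cc n l / 2 ^ (l + 1)) * (Real.exp (-v) / v ^ (l + 1)))
      (∑ l ∈ range (n + 1),
        (Real.pi * cc n l / 2 ^ (l + 1)) * (-(Real.exp (-u)) * (u + (l : ℝ) + 1) / u ^ (l + 2))) u := by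
    refine HasDerivAt.fun_sum fun l _ => ?_
    have hexp : HasDerivAt (fun v : ℝ => Real.exp (-v)) (Real.exp (-u) * (-1)) u :=
      HasDerivAt.exp (hasDerivAt_id u).neg
    have hpow : HasDerivAt (fun v : ℝ => v ^ (l + 1)) (((l : ℝ) + 1) * u ^ l) u := by
      have := hasDerivAt_pow (l + 1) u
      simpa using this
    have hdiv := (hexp.fun_div hpow (pow_ne_zero _ hu')).const_mul
      (Real.pi * cc n l / 2 ^ (l + 1))
    convert hdiv using 1
    · rfl
    field_simp
    ring
  exact hF.congr_of_eventuallyEq <|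
    Filter.eventually_of_mem (Ioi_mem_nhds hu) fun v hv => sh_eq_sum n hv

/-- The Kirkwood harmonic coefficients for dielectric ratio `ε = 1`. -/
noncomputable def kirkwoodM1 (n : ℕ) (u : ℝ) : ℝ :=
  (((n : ℝ) + 1) * sphericalHankel n u + u * deriv (fun v => sphericalHankel n v) u) /
    ((n : ℝ) * sphericalHankel n u - u * deriv (fun v => sphericalHankel n v) u)

lemma den_closed (n : ℕ) {u : ℝ} (hu : 0 < u) :
    (n : ℝ) * sphericalHankel n u - u * deriv (fun v => sphericalHankel n v) u
      = (Real.pi * Real.exp (-u) / (2 * u)) * (u * ggf u (n + 1)) := by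
  have hu' : u ≠ 0 := hu.ne'
  rw [(sh_hasDerivAt n hu).deriv, sh_eq_sum n hu, ← idII hu n]
  unfold ggf hhf
  simp only [mul_add, Finset.mul_sum]
  rw [← Finset.sum_sub_distrib, ← Finset.sum_add_distrib]
  refine Finset.sum_congr rfl fun l _ => ?_
  simp only [one_div_pow, mul_pow, pow_add, pow_one]
  field_simp
  ring

lemma num_closed (m : ℕ) {u : ℝ} (hu : 0 < u) :
    (((m + 1 : ℕ) : ℝ) + 1) * sphericalHankel (m + 1) u
        + u * deriv (fun v => sphericalHankel (m + 1) v) u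
      = (Real.pi * Real.exp (-u) / (2 * u)) * (-u * ggf u m) := by
  have hu' : u ≠ 0 := hu.ne'
  rw [(sh_hasDerivAt (m + 1) hu).deriv, sh_eq_sum (m + 1) hu, ← idI hu m]
  unfold ggf hhf
  simp only [mul_sub, Finset.mul_sum]
  rw [← Finset.sum_add_distrib, ← Finset.sum_sub_distrib]
  refine Finset.sum_congr rfl fun l _ => ?_
  push_cast
  simp only [one_div_pow, mul_pow, pow_add, pow_one]
  field_simp
  ring

lemma kirkwood_closed (m : ℕ) {u : ℝ} (hu : 0 < u) :
    kirkwoodM1 (m + 1) u = -(ggf u m / ggf u (m + 2)) := by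
  have hC : Real.pi * Real.exp (-u) / (2 * u) ≠ 0 := by
    have := Real.pi_pos
    have := Real.exp_pos (-u)
    positivity
  unfold kirkwoodM1
  rw [num_closed m hu, den_closed (m + 1) hu, mul_div_mul_left _ _ hC,
    show m + 1 + 1 = m + 2 from rfl, neg_mul, neg_div, mul_div_mul_left _ _ hu.ne']

lemma ccStep {j m : ℕ} (h : j + 1 ≤ m) :
    cc m (m - (j + 1)) = cc m (m - j) * (((m : ℝ) - j) / (((j : ℝ) + 1) * (2 * m - j))) := by
  obtain ⟨k, rfl⟩ : ∃ k, m = j + 1 + k := ⟨m - (j + 1), by omega⟩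
  unfold cc
  have h1 : j + 1 + k - (j + 1) = k := by omega
  have h2 : j + 1 + k - j = k + 1 := by omega
  have h3 : j + 1 + k + k = j + 2 * k + 1 := by ring
  have h4 : j + 1 + k + (k + 1) = j + 2 * k + 1 + 1 := by ring
  have h5 : j + 1 + k - (k + 1) = j := by omega
  have h6 : j + 1 + k - k = j + 1 := by omega
  rw [h1, h2, h3, h4, h5, h6]
  have hj : (2 * ((j : ℝ) + 1 + k) - j) = (j : ℝ) + 2 * k + 1 + 1 := by ring
  simp only [Nat.factorial_succ]
  push_cast
  have hne1 : ((j : ℝ) + 1) * (2 * ((j : ℝ) + 1 + (k : ℝ)) - (j : ℝ)) ≠ 0 := by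
    have : (0:ℝ) ≤ (j : ℝ) := by positivity
    have : (0:ℝ) ≤ (k : ℝ) := by positivity
    nlinarith
  have hne2 : (j : ℝ) + 2 * k + 1 + 1 ≠ 0 := by positivity
  have hne3 : 2 * ((j : ℝ) + 1 + k) - j ≠ 0 := by rw [hj]; positivity
  field_simp
  ring

lemma cc_ratio_le {j m : ℕ} (hj : j ≤ m) :
    cc m (m - j) / cc m m ≤ 1 / (Nat.factorial j) := by
  induction j with
  | zero =>
    simp [div_self (cc_pos m m).ne', Nat.factorial]
  | succ j ih =>
    have hj' : j ≤ m := by omega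
    have hjm : ((j : ℝ) : ℝ) ≤ (m : ℝ) := by exact_mod_cast hj'
    have hden : (0 : ℝ) < ((j : ℝ) + 1) * (2 * m - j) := by
      have h1 : (j : ℝ) + 1 ≤ (m : ℝ) := by exact_mod_cast hj
      nlinarith
    have hfrac0 : (0 : ℝ) ≤ ((m : ℝ) - j) / (((j : ℝ) + 1) * (2 * m - j)) := by
      apply div_nonneg (by linarith) hden.le
    have hfrac : ((m : ℝ) - j) / (((j : ℝ) + 1) * (2 * m - j)) ≤ 1 / ((j : ℝ) + 1) := by
      rw [div_le_div_iff₀ hden (by positivity)]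
      nlinarith
    rw [ccStep hj,
      show cc m (m - j) * (((m : ℝ) - j) / (((j : ℝ) + 1) * (2 * m - j))) / cc m m
        = cc m (m - j) / cc m m * (((m : ℝ) - j) / (((j : ℝ) + 1) * (2 * m - j))) by ring]
    calc cc m (m - j) / cc m m * (((m : ℝ) - j) / (((j : ℝ) + 1) * (2 * m - j)))
        ≤ (1 / (Nat.factorial j)) * (1 / ((j : ℝ) + 1)) := by
          apply mul_le_mul (ih hj') hfrac hfrac0 (by positivity)
      _ = 1 / (Nat.factorial (j + 1)) := by
          rw [Nat.factorial_succ]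
          push_cast
          field_simp

lemma lin_ratio (a b : ℝ) :
    Tendsto (fun p : ℕ => ((p : ℝ) + a) / (2 * (p : ℝ) + b)) atTop (nhds (1 / 2)) := by
  have h0 : Tendsto (fun p : ℕ => a / (p : ℝ)) atTop (nhds 0) :=
    tendsto_const_div_atTop_nhds_zero_nat a
  have h0' : Tendsto (fun p : ℕ => b / (p : ℝ)) atTop (nhds 0) :=
    tendsto_const_div_atTop_nhds_zero_nat b
  have hmain : Tendsto (fun p : ℕ => (1 + a / (p : ℝ)) / (2 + b / (p : ℝ))) atTop
      (nhds ((1 + 0) / (2 + 0))) := by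
    apply Tendsto.div (tendsto_const_nhds.add h0) (tendsto_const_nhds.add h0')
    norm_num
  have : ((1 : ℝ) + 0) / (2 + 0) = 1 / 2 := by norm_num
  rw [this] at hmain
  apply hmain.congr'
  have hev : ∀ᶠ p : ℕ in atTop, (p : ℝ) ≥ max 1 (max (|a| + 1) (|b| + 1)) := by
    have := tendsto_natCast_atTop_atTop (R := ℝ)
    exact this.eventually_ge_atTop _
  filter_upwards [hev] with p hp
  have h1 : (1 : ℝ) ≤ (p : ℝ) := le_trans (le_max_left _ _) hp
  have hp0 : (p : ℝ) ≠ 0 := by linarith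
  have ha : |a| + 1 ≤ (p : ℝ) := le_trans (le_trans (le_max_left _ _) (le_max_right _ _)) hp
  have hb : |b| + 1 ≤ (p : ℝ) := le_trans (le_trans (le_max_right _ _) (le_max_right _ _)) hp
  have hden : 2 * (p : ℝ) + b ≠ 0 := by
    have := neg_abs_le b
    nlinarith
  have hden2 : 2 + b / (p : ℝ) ≠ 0 := by
    intro hcon
    apply hden
    have : (p : ℝ) * (2 + b / p) = 2 * p + b := by field_simp
    rw [hcon] at this
    simpa using this.symm
  field_simp

lemma cc_ratio_tendsto (j : ℕ) :
    Tendsto (fun m : ℕ => cc m (m - j) / cc m m) atTop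
      (nhds (1 / (Nat.factorial j * 2 ^ j))) := by
  induction j with
  | zero =>
    have h : (fun m : ℕ => cc m (m - 0) / cc m m) = fun _ => (1 : ℝ) := by
      funext m
      simp [div_self (cc_pos m m).ne']
    rw [h]
    simpa [Nat.factorial] using tendsto_const_nhds (α := ℝ) (f := atTop (α := ℕ))
  | succ j ih =>
    have hfr : Tendsto (fun m : ℕ => ((m : ℝ) - j) / (((j : ℝ) + 1) * (2 * m - j)))
        atTop (nhds ((1 / ((j : ℝ) + 1)) * (1 / 2))) := by
      refine ((lin_ratio (-(j : ℝ)) (-(j : ℝ))).const_mul (1 / ((j : ℝ) + 1))).congr fun p => ?_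
      rw [div_mul_div_comm, one_mul, sub_eq_add_neg, sub_eq_add_neg (2 * (p : ℝ))]
    have hval : (1 : ℝ) / ((Nat.factorial (j + 1)) * 2 ^ (j + 1))
        = 1 / (Nat.factorial j * 2 ^ j) * (1 / ((j : ℝ) + 1) * (1 / 2)) := by
      rw [Nat.factorial_succ]
      push_cast
      field_simp
      ring
    rw [hval]
    refine Tendsto.congr' ?_ (ih.mul hfr)
    filter_upwards [eventually_ge_atTop (j + 1)] with m hm
    rw [ccStep hm]
    ring

noncomputable def GG (u : ℝ) (m : ℕ) : ℝ :=
  ∑ j ∈ range (m + 1), (cc m (m - j) / cc m m) * (2 * u) ^ j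

lemma GG_pos {u : ℝ} (hu : 0 < u) (m : ℕ) : 0 < GG u m := by
  apply Finset.sum_pos
  · intro j _
    have h1 := cc_pos m (m - j)
    have h2 := cc_pos m m
    positivity
  · exact ⟨0, Finset.mem_range.mpr (Nat.succ_pos m)⟩

lemma ggf_eq_GG {u : ℝ} (hu : 0 < u) (m : ℕ) :
    ggf u m = cc m m * (1 / (2 * u)) ^ m * GG u m := by
  have h2u : (2 : ℝ) * u ≠ 0 := by positivity
  unfold ggf GG
  rw [Finset.mul_sum, ← Finset.sum_range_reflect]
  refine Finset.sum_congr rfl fun j hj => ?_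
  have hj' : j ≤ m := by have := Finset.mem_range.mp hj; omega
  have hsplit : m - 1 - j = m - j - 1 + 0 := by omega
  have hidx : m + 1 - 1 - j = m - j := by omega
  rw [hidx]
  have hxp : (1 / (2 * u)) ^ m * (2 * u) ^ j = (1 / (2 * u)) ^ (m - j) := by
    rw [show m = (m - j) + j by omega, pow_add, mul_assoc, ← mul_pow]
    field_simp
    simp
  calc cc m (m - j) * (1 / (2 * u)) ^ (m - j)
      = cc m (m - j) * ((1 / (2 * u)) ^ m * (2 * u) ^ j) := by rw [hxp]
    _ = cc m m * (1 / (2 * u)) ^ m * (cc m (m - j) / cc m m * (2 * u) ^ j) := by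
        field_simp [(cc_pos m m).ne']

noncomputable def LL (u : ℝ) : ℝ := ∑' j : ℕ, u ^ j / (Nat.factorial j)

lemma LL_pos {u : ℝ} (hu : 0 < u) : 0 < LL u := by
  refine Summable.tsum_pos (Real.summable_pow_div_factorial u) (fun j => by positivity) 0 ?_
  simp [Nat.factorial]

lemma tendsto_GG {u : ℝ} (hu : 0 < u) : Tendsto (fun m => GG u m) atTop (nhds (LL u)) := by
  set f : ℕ → ℕ → ℝ :=
    fun m j => if j ≤ m then (cc m (m - j) / cc m m) * (2 * u) ^ j else 0 with hf
  have hGG : ∀ m, GG u m = ∑' j, f m j := by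
    intro m
    rw [tsum_eq_sum (s := range (m + 1))
      (fun j hj => if_neg (by simp only [Finset.mem_range] at hj; omega))]
    exact (Finset.sum_congr rfl fun j hj =>
      (if_pos (by have := Finset.mem_range.mp hj; omega))).symm
  have hmain : Tendsto (fun m => ∑' j, f m j) atTop (nhds (LL u)) := by
    apply tendsto_tsum_of_dominated_convergence
      (bound := fun j => (2 * u) ^ j / (Nat.factorial j))
      (Real.summable_pow_div_factorial (2 * u))
    · intro j
      have hlim := (cc_ratio_tendsto j).mul_const ((2 * u) ^ j)
      have hval : (1 : ℝ) / (Nat.factorial j * 2 ^ j) * (2 * u) ^ j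
          = u ^ j / Nat.factorial j := by
        rw [mul_pow]
        field_simp
      rw [hval] at hlim
      refine Tendsto.congr' ?_ hlim
      filter_upwards [eventually_ge_atTop j] with m hm
      rw [hf]
      simp only [if_pos hm]
    · filter_upwards with m
      intro j
      by_cases hjm : j ≤ m
      · rw [hf]
        simp only [if_pos hjm]
        rw [Real.norm_eq_abs, abs_of_nonneg (by
          have h1 := cc_pos m (m - j)
          have h2 := cc_pos m m
          positivity)]
        rw [div_eq_mul_one_div ((2 * u) ^ j) ((Nat.factorial j : ℝ)), mul_comm ((2*u)^j)]
        exact mul_le_mul_of_nonneg_right (cc_ratio_le hjm) (by positivity)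
      · rw [hf]
        simp only [if_neg hjm]
        simp only [norm_zero]
        positivity
  exact hmain.congr fun m => (hGG m).symm

lemma key_eq {u : ℝ} (hu : 0 < u) (p : ℕ) :
    ((p + 1 : ℕ) : ℝ) ^ 2 * kirkwoodM1 (p + 1) u
      = -(u ^ 2 * (((p : ℝ) + 1) / (2 * (p : ℝ) + 1)) * (((p : ℝ) + 1) / (2 * (p : ℝ) + 3))
          * (GG u p / GG u (p + 2))) := by
  have hGp2 := (GG_pos hu (p + 2)).ne'
  have hccp := (cc_pos p p).ne'
  have hu' : u ≠ 0 := hu.ne'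
  have h2u : (2 : ℝ) * u ≠ 0 := by positivity
  have hd1 : (2 * (p : ℝ) + 1) ≠ 0 := by positivity
  have hd2 : (2 * (p : ℝ) + 3) ≠ 0 := by positivity
  rw [kirkwood_closed p hu, ggf_eq_GG hu p, ggf_eq_GG hu (p + 2),
    show cc (p + 2) (p + 2) = 2 * cc (p + 1) (p + 1) * (2 * ((p + 1 : ℕ) : ℝ) + 1)
      from cc_top2 (p + 1),
    cc_top2 p]
  push_cast
  rw [show p + 2 = p + 1 + 1 from rfl, pow_succ, pow_succ]
  simp only [one_div_pow, mul_pow]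
  field_simp
  ring

/-- For `ε = 1` and fixed `u > 0`, `n² M_n(u) → −u²/4`; in particular the series
`Σ M_n(u)` converges absolutely. -/
theorem kirkwoodM1_asymptotics (u : ℝ) (hu : 0 < u) :
    Tendsto (fun n : ℕ => (n : ℝ) ^ 2 * kirkwoodM1 n u) atTop (nhds (-(u ^ 2) / 4)) ∧
    Summable (fun n : ℕ => |kirkwoodM1 n u|) := by
  have hL := LL_pos hu
  have TG := tendsto_GG hu
  have TG2 : Tendsto (fun p : ℕ => GG u (p + 2)) atTop (nhds (LL u)) :=
    TG.comp (Filter.tendsto_add_atTop_nat 2)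
  have Tfull : Tendsto
      (fun p : ℕ => -(u ^ 2 * (((p : ℝ) + 1) / (2 * (p : ℝ) + 1))
        * (((p : ℝ) + 1) / (2 * (p : ℝ) + 3)) * (GG u p / GG u (p + 2))))
      atTop (nhds (-(u ^ 2 * (1 / 2) * (1 / 2) * (LL u / LL u)))) := by
    exact ((((tendsto_const_nhds (x := u ^ 2)).mul (lin_ratio 1 1)).mul (lin_ratio 1 3)).mul
      (TG.div TG2 hL.ne')).neg
  have hval : -(u ^ 2 * (1 / 2) * (1 / 2) * (LL u / LL u)) = -(u ^ 2) / 4 := by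
    rw [div_self hL.ne']
    ring
  rw [hval] at Tfull
  have hT : Tendsto (fun n : ℕ => (n : ℝ) ^ 2 * kirkwoodM1 n u) atTop (nhds (-(u ^ 2) / 4)) := by
    rw [← Filter.tendsto_add_atTop_iff_nat 1]
    exact Tfull.congr fun p => (key_eq hu p).symm
  refine ⟨hT, ?_⟩
  have hO1 : (fun n : ℕ => (n : ℝ) ^ 2 * kirkwoodM1 n u) =O[atTop] (fun _ => (1 : ℝ)) :=
    hT.isBigO_one ℝ
  have hO2 : (fun n : ℕ => |kirkwoodM1 n u|) =O[atTop] (fun n : ℕ => 1 / (n : ℝ) ^ 2) := by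
    have heq : (fun n : ℕ => |kirkwoodM1 n u|) =ᶠ[atTop]
        (fun n : ℕ => |((n : ℝ) ^ 2 * kirkwoodM1 n u) * (1 / (n : ℝ) ^ 2)|) := by
      filter_upwards [eventually_ge_atTop 1] with n hn
      have hn' : ((n : ℝ)) ≠ 0 := by
        have : (1 : ℝ) ≤ (n : ℝ) := by exact_mod_cast hn
        linarith
      congr 1
      field_simp
    calc (fun n : ℕ => |kirkwoodM1 n u|)
        =O[atTop] (fun n : ℕ => ((n : ℝ) ^ 2 * kirkwoodM1 n u) * (1 / (n : ℝ) ^ 2)) := by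
          apply Asymptotics.IsBigO.of_bound 1
          filter_upwards [heq] with n hn
          simp only [Real.norm_eq_abs, one_mul, abs_abs]
          exact le_of_eq hn
      _ =O[atTop] (fun n : ℕ => (1 : ℝ) * (1 / (n : ℝ) ^ 2)) :=
          hO1.mul (Asymptotics.isBigO_refl _ _)
      _ = (fun n : ℕ => 1 / (n : ℝ) ^ 2) := by funext n; ring
  exact summable_of_isBigO_nat (Real.summable_one_div_nat_pow.mpr one_lt_two) hO2
end
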